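/- arXiv:1507.06796 — 13 statements merged into one kernel-verified Lean document; each statement's English description precedes it below -/
import Mathlib

section
/- Separation lemma in (ℝ≥0∞)^n: Let n ≥ 1, let V = {y : Fin n → ℝ≥0∞ | ∀ i, 1 < y i}, and let K ⊆ (Fin n → ℝ≥0∞) be a convex set disjoint from V. Then there exist nonnegative reals a : Fin n → ℝ≥0 with ∑ i, a i = 1 such that ∑ i, (a i : ℝ≥0∞) * x i ≤ 1 for every x ∈ K and 1 < ∑ i, (a i : ℝ≥0∞) * y i for every y ∈ V. -/
open scoped ENNReal NNReal

private lemma clm_pi_eq_sum {n : ℕ} (f : (Fin n → ℝ) →L[ℝ] ℝ) (v : Fin n → ℝ) :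
    f v = ∑ i, v i * f (fun j => if i = j then 1 else 0) := by
  conv_lhs => rw [pi_eq_sum_univ v]
  rw [map_sum]
  simp [smul_eq_mul]

private lemma iSup_min_natCast (z : ℝ≥0∞) : ⨆ N : ℕ, min z (N : ℝ≥0∞) = z := by
  have : (fun N : ℕ => min z (N : ℝ≥0∞)) = fun N : ℕ => z ⊓ (N : ℝ≥0∞) := rfl
  rw [this, ← inf_iSup_eq, ENNReal.iSup_natCast, inf_top_eq]

/-- Separation lemma in `(ℝ≥0∞)^n`: if `K` is a convex subset of `(Fin n → ℝ≥0∞)`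
disjoint from `V = {y | ∀ i, 1 < y i}`, then there is a convex combination
separating `K` from `V`. -/
theorem separation_lemma_ennreal (n : ℕ) (hn : 1 ≤ n)
    (V : Set (Fin n → ℝ≥0∞)) (hV : V = {y | ∀ i, 1 < y i})
    (K : Set (Fin n → ℝ≥0∞))
    (hKconv : ∀ x ∈ K, ∀ y ∈ K, ∀ r : ℝ≥0, r ≤ 1 →
      (fun i => (r : ℝ≥0∞) * x i + ((1 - r : ℝ≥0) : ℝ≥0∞) * y i) ∈ K)
    (hdisj : Disjoint K V) :
    ∃ a : Fin n → ℝ≥0, ∑ i, a i = 1 ∧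
      (∀ x ∈ K, ∑ i, (a i : ℝ≥0∞) * x i ≤ 1) ∧
      (∀ y ∈ V, 1 < ∑ i, (a i : ℝ≥0∞) * y i) := by
  subst hV
  -- The V-side condition follows from `∑ a = 1` alone.
  have hVside : ∀ a : Fin n → ℝ≥0, ∑ i, a i = 1 →
      ∀ y ∈ {y : Fin n → ℝ≥0∞ | ∀ i, 1 < y i}, 1 < ∑ i, (a i : ℝ≥0∞) * y i := by
    intro a ha y hy
    obtain ⟨i0, hi0⟩ : ∃ i, a i ≠ 0 := by
      by_contra h
      push_neg at h
      simp [h] at ha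
    have h1 : (1 : ℝ≥0∞) = (a i0 : ℝ≥0∞) + ∑ i ∈ Finset.univ.erase i0, (a i : ℝ≥0∞) := by
      rw [Finset.add_sum_erase Finset.univ (fun i => ((a i : ℝ≥0∞))) (Finset.mem_univ i0),
        ← ENNReal.coe_finset_sum, ha, ENNReal.coe_one]
    have h2 : ∑ i, (a i : ℝ≥0∞) * y i
        = (a i0 : ℝ≥0∞) * y i0 + ∑ i ∈ Finset.univ.erase i0, (a i : ℝ≥0∞) * y i :=
      (Finset.add_sum_erase Finset.univ (fun i => (a i : ℝ≥0∞) * y i)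
        (Finset.mem_univ i0)).symm
    rw [h1, h2]
    have hsne : (∑ i ∈ Finset.univ.erase i0, (a i : ℝ≥0∞)) ≠ ⊤ := by
      rw [← ENNReal.coe_finset_sum]; exact ENNReal.coe_ne_top
    have hstrict : (a i0 : ℝ≥0∞) < (a i0 : ℝ≥0∞) * y i0 := by
      conv_lhs => rw [← mul_one (a i0 : ℝ≥0∞)]
      exact (ENNReal.mul_lt_mul_iff_right (by exact_mod_cast hi0) ENNReal.coe_ne_top).2 (hy i0)
    calc (a i0 : ℝ≥0∞) + ∑ i ∈ Finset.univ.erase i0, (a i : ℝ≥0∞)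
        < (a i0 : ℝ≥0∞) * y i0 + ∑ i ∈ Finset.univ.erase i0, (a i : ℝ≥0∞) :=
          ENNReal.add_lt_add_right hsne hstrict
      _ ≤ (a i0 : ℝ≥0∞) * y i0 + ∑ i ∈ Finset.univ.erase i0, (a i : ℝ≥0∞) * y i := by
          gcongr with i hi
          conv_lhs => rw [← mul_one (a i : ℝ≥0∞)]
          exact mul_le_mul_right (hy i).le _
  rcases K.eq_empty_or_nonempty with hKe | ⟨k0, hk0⟩
  · refine ⟨fun i => if i = ⟨0, hn⟩ then 1 else 0, by simp, by simp [hKe], ?_⟩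
    exact hVside _ (by simp)
  -- Downward closure of `K`.
  set D : Set (Fin n → ℝ≥0∞) := {x | ∃ k ∈ K, x ≤ k} with hD
  have hDconv : ∀ x ∈ D, ∀ y ∈ D, ∀ r : ℝ≥0, r ≤ 1 →
      (fun i => (r : ℝ≥0∞) * x i + ((1 - r : ℝ≥0) : ℝ≥0∞) * y i) ∈ D := by
    rintro x ⟨k, hk, hxk⟩ y ⟨k', hk', hyk'⟩ r hr
    refine ⟨_, hKconv k hk k' hk' r hr, fun i => ?_⟩
    exact add_le_add (mul_le_mul_right (hxk i) _) (mul_le_mul_right (hyk' i) _)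
  -- The real-valued trace of `D`.
  set C : Set (Fin n → ℝ) :=
    {v | (∀ i, 0 ≤ v i) ∧ (fun i => ENNReal.ofReal (v i)) ∈ D} with hC
  have hCconv : Convex ℝ C := by
    rintro u ⟨hu0, huD⟩ v ⟨hv0, hvD⟩ p q hp hq hpq
    refine ⟨fun i => add_nonneg (mul_nonneg hp (hu0 i)) (mul_nonneg hq (hv0 i)), ?_⟩
    have hr1 : (NNReal.mk p hp) ≤ 1 := by
      rw [← NNReal.coe_le_coe]; simp; linarith
    have := hDconv _ huD _ hvD (NNReal.mk p hp) hr1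
    convert this using 1
    funext i
    have hq' : 1 - (NNReal.mk p hp) = (NNReal.mk q hq) := by
      rw [← NNReal.coe_inj, NNReal.coe_sub hr1]
      simp only [NNReal.coe_one, NNReal.coe_mk]
      linarith
    simp only [Pi.add_apply, Pi.smul_apply, smul_eq_mul]
    rw [ENNReal.ofReal_add (mul_nonneg hp (hu0 i)) (mul_nonneg hq (hv0 i)),
      ENNReal.ofReal_mul hp, ENNReal.ofReal_mul hq, hq']
    congr 2
    · simp [ENNReal.ofReal, Real.toNNReal_of_nonneg hp]
    · simp [ENNReal.ofReal, Real.toNNReal_of_nonneg hq]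
  -- The open box `(1,∞)^n`.
  set O : Set (Fin n → ℝ) := Set.univ.pi fun _ => Set.Ioi 1 with hO
  have hOopen : IsOpen O := isOpen_set_pi Set.finite_univ fun i _ => isOpen_Ioi
  have hOconv : Convex ℝ O := convex_pi fun i _ => convex_Ioi 1
  have hdisjOC : Disjoint O C := by
    rw [Set.disjoint_left]
    rintro v hvO ⟨hv0, k, hk, hvk⟩
    refine Set.disjoint_left.1 hdisj hk fun i => ?_
    refine lt_of_lt_of_le ?_ (hvk i)
    exact ENNReal.one_lt_ofReal.2 (hvO i (Set.mem_univ i))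
  obtain ⟨f, u, hfO, hfC⟩ := geometric_hahn_banach_open hOconv hOopen hCconv hdisjOC
  set g : Fin n → ℝ := fun i => -f (fun j => if i = j then 1 else 0) with hg
  have hfg : ∀ v, -f v = ∑ i, v i * g i := by
    intro v
    rw [clm_pi_eq_sum f v, ← Finset.sum_neg_distrib]
    simp [hg, mul_neg]
  set c : ℝ := -u with hc
  have hC_le : ∀ v ∈ C, ∑ i, v i * g i ≤ c := by
    intro v hv
    rw [hc]
    linarith [hfC v hv, hfg v]
  have hO_gt : ∀ v ∈ O, c < ∑ i, v i * g i := by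
    intro v hv
    rw [hc]
    linarith [hfO v hv, hfg v]
  have h0C : (0 : Fin n → ℝ) ∈ C := ⟨fun i => le_rfl, k0, hk0, fun i => by simp⟩
  have hc0 : 0 ≤ c := by have := hC_le 0 h0C; simpa using this
  have hg0 : ∀ i, 0 ≤ g i := by
    intro i
    by_contra hneg
    push_neg at hneg
    set S := ∑ j, 2 * g j with hS
    have hw : ∀ t : ℝ, 0 ≤ t → c < S + t * g i := by
      intro t ht
      have hmem : (fun j => if i = j then 2 + t else 2) ∈ O := by
        intro j _
        show (1 : ℝ) < if i = j then 2 + t else 2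
        split_ifs <;> linarith
      have := hO_gt _ hmem
      refine lt_of_lt_of_le this (le_of_eq ?_)
      have hterm : ∀ j, (if i = j then 2 + t else 2) * g j
          = 2 * g j + (if i = j then t * g j else 0) := by
        intro j; split_ifs <;> ring
      rw [Finset.sum_congr rfl fun j _ => hterm j, Finset.sum_add_distrib,
        Finset.sum_ite_eq Finset.univ i (fun j => t * g j), hS]
      simp
    have hS0 : c < S := by simpa using hw 0 le_rfl
    have ht0 : 0 < (c - S) / g i := div_pos_of_neg_of_neg (by linarith) hneg
    have := hw ((c - S) / g i + 1) (by linarith)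
    rw [add_mul, div_mul_cancel₀ _ (ne_of_lt hneg), one_mul] at this
    linarith
  have hSpos : 0 < ∑ i, g i := by
    have hmem : (fun _ : Fin n => (2 : ℝ)) ∈ O := fun i _ => by
      show (1:ℝ) < 2
      norm_num
    have h2 := hO_gt _ hmem
    have : ∑ i, (2 : ℝ) * g i = 2 * ∑ i, g i := by rw [Finset.mul_sum]
    rw [this] at h2
    linarith
  have hSc : c ≤ ∑ i, g i := by
    refine le_of_forall_pos_lt_add fun ε hε => ?_
    set δ := ε / ∑ i, g i with hδ
    have hδpos : 0 < δ := div_pos hε hSpos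
    have hmem : (fun _ : Fin n => (1 + δ : ℝ)) ∈ O := fun i _ => by
      show (1:ℝ) < 1 + δ
      linarith
    have := hO_gt _ hmem
    have heq : ∑ i, (1 + δ) * g i = (∑ i, g i) + ε := by
      rw [← Finset.mul_sum, add_mul, one_mul, hδ, div_mul_cancel₀ _ (ne_of_gt hSpos)]
    rw [heq] at this
    exact this
  set S := ∑ i, g i with hS
  refine ⟨fun i => (g i / S).toNNReal, ?_, ?_, ?_⟩
  · apply NNReal.coe_injective
    push_cast
    rw [Finset.sum_congr rfl fun i _ => Real.coe_toNNReal _ (div_nonneg (hg0 i) hSpos.le),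
      ← Finset.sum_div, div_self (ne_of_gt hSpos)]
  · intro x hx
    have hxN : ∀ N : ℕ, ∑ i, (((g i / S).toNNReal : ℝ≥0∞)) * min (x i) (N : ℝ≥0∞) ≤ 1 := by
      intro N
      set v : Fin n → ℝ := fun i => (min (x i) (N : ℝ≥0∞)).toReal with hv
      have hvfin : ∀ i, min (x i) (N : ℝ≥0∞) ≠ ⊤ :=
        fun i => ne_top_of_le_ne_top (ENNReal.natCast_ne_top N) (min_le_right _ _)
      have hvC : v ∈ C := by
        refine ⟨fun i => ENNReal.toReal_nonneg, x, hx, fun i => ?_⟩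
        show ENNReal.ofReal ((min (x i) (N : ℝ≥0∞)).toReal) ≤ x i
        rw [ENNReal.ofReal_toReal (hvfin i)]
        exact min_le_left _ _
      have hb := hC_le v hvC
      have hle1 : ∑ i, (g i / S) * v i ≤ 1 := by
        have heq : ∑ i, (g i / S) * v i = (∑ i, v i * g i) / S := by
          rw [Finset.sum_div]
          exact Finset.sum_congr rfl fun i _ => by ring
        rw [heq, div_le_one hSpos]
        exact hb.trans hSc
      calc ∑ i, (((g i / S).toNNReal : ℝ≥0∞)) * min (x i) (N : ℝ≥0∞)
          = ENNReal.ofReal (∑ i, (g i / S) * v i) := by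
            rw [ENNReal.ofReal_sum_of_nonneg fun i _ =>
              mul_nonneg (div_nonneg (hg0 i) hSpos.le) ENNReal.toReal_nonneg]
            refine Finset.sum_congr rfl fun i _ => ?_
            rw [ENNReal.ofReal_mul (div_nonneg (hg0 i) hSpos.le)]
            congr 1
            exact (ENNReal.ofReal_toReal (hvfin i)).symm
        _ ≤ 1 := ENNReal.ofReal_le_one.2 hle1
    have hmono : ∀ i : Fin n,
        Monotone fun N : ℕ => (((g i / S).toNNReal : ℝ≥0∞)) * min (x i) (N : ℝ≥0∞) := by
      intro i N M hNM
      exact mul_le_mul_right (min_le_min le_rfl (by exact_mod_cast Nat.cast_le.2 hNM)) _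
    calc ∑ i, (((g i / S).toNNReal : ℝ≥0∞)) * x i
        = ∑ i, ⨆ N : ℕ, (((g i / S).toNNReal : ℝ≥0∞)) * min (x i) (N : ℝ≥0∞) := by
          refine Finset.sum_congr rfl fun i _ => ?_
          rw [← ENNReal.mul_iSup, iSup_min_natCast]
      _ = ⨆ N : ℕ, ∑ i, (((g i / S).toNNReal : ℝ≥0∞)) * min (x i) (N : ℝ≥0∞) :=
          ENNReal.finsetSum_iSup_of_monotone hmono
      _ ≤ 1 := iSup_le hxN
  · refine hVside _ ?_
    apply NNReal.coe_injective
    push_cast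
    rw [Finset.sum_congr rfl fun i _ => Real.coe_toNNReal _ (div_nonneg (hg0 i) hSpos.le),
      ← Finset.sum_div, div_self (ne_of_gt hSpos)]
end

section
/- Interpolation by convex combinations: Let D be a cone, let n ≥ 1, let φ : D → ℝ≥0∞ be a sublinear functional, and let ψ : Fin n → (D → ℝ≥0∞) be linear functionals such that (⨅ i, ψ i x) ≤ φ x for all x ∈ D. Then there exist a : Fin n → ℝ≥0 with ∑ i, a i = 1 such that for all x ∈ D, (⨅ i, ψ i x) ≤ ∑ i, (a i : ℝ≥0∞) * ψ i x and ∑ i, (a i : ℝ≥0∞) * ψ i x ≤ φ x. -/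
open scoped ENNReal NNReal

/-- Interpolation by convex combinations (Proposition `key`): given a sublinear
functional `φ` on a cone `D` dominating the pointwise infimum of finitely many
linear functionals `ψ i`, some convex combination of the `ψ i` interpolates
between the infimum and `φ`. -/
theorem interpolation_convex_combination {D : Type*} [AddCommMonoid D] [Module ℝ≥0 D]
    (n : ℕ) (hn : 1 ≤ n) (φ : D → ℝ≥0∞)
    (hφ_hom : ∀ (r : ℝ≥0) (a : D), φ (r • a) = (r : ℝ≥0∞) * φ a)
    (hφ_subadd : ∀ a b : D, φ (a + b) ≤ φ a + φ b)
    (ψ : Fin n → D → ℝ≥0∞)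
    (hψ_hom : ∀ i, ∀ (r : ℝ≥0) (a : D), ψ i (r • a) = (r : ℝ≥0∞) * ψ i a)
    (hψ_add : ∀ i, ∀ a b : D, ψ i (a + b) = ψ i a + ψ i b)
    (hle : ∀ x : D, (⨅ i, ψ i x) ≤ φ x) :
    ∃ a : Fin n → ℝ≥0, ∑ i, a i = 1 ∧
      ∀ x : D, (⨅ i, ψ i x) ≤ ∑ i, (a i : ℝ≥0∞) * ψ i x ∧
        ∑ i, (a i : ℝ≥0∞) * ψ i x ≤ φ x := by
  haveI : Nonempty (Fin n) := ⟨⟨0, hn⟩⟩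
  have φ0 : φ 0 = 0 := by simpa using hφ_hom 0 0
  -- the set of real vectors dominated by (ψ i x - φ x)_i for some x with φ x < ∞
  set W : Set (Fin n → ℝ) :=
    {w | ∃ x : D, φ x ≠ ∞ ∧ ∀ i, ENNReal.ofReal (w i + (φ x).toReal) ≤ ψ i x} with hWdef
  have hW0 : (0 : Fin n → ℝ) ∈ W := by
    refine ⟨0, by simp [φ0], fun i => ?_⟩
    simp [φ0]
  -- W is convex
  have hWconv : Convex ℝ W := by
    rintro w ⟨x, hx, hCx⟩ w' ⟨y, hy, hCy⟩ t s ht hs hts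
    have hφz : φ (t.toNNReal • x + s.toNNReal • y) ≤
        (t.toNNReal : ℝ≥0∞) * φ x + (s.toNNReal : ℝ≥0∞) * φ y := by
      refine (hφ_subadd _ _).trans ?_
      rw [hφ_hom, hφ_hom]
    have htop : ((t.toNNReal : ℝ≥0∞) * φ x + (s.toNNReal : ℝ≥0∞) * φ y) ≠ ⊤ :=
      ENNReal.add_ne_top.mpr ⟨ENNReal.mul_ne_top ENNReal.coe_ne_top hx,
        ENNReal.mul_ne_top ENNReal.coe_ne_top hy⟩
    refine ⟨t.toNNReal • x + s.toNNReal • y, ne_top_of_le_ne_top htop hφz, fun i => ?_⟩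
    have hψz : ψ i (t.toNNReal • x + s.toNNReal • y) =
        (t.toNNReal : ℝ≥0∞) * ψ i x + (s.toNNReal : ℝ≥0∞) * ψ i y := by
      rw [hψ_add, hψ_hom, hψ_hom]
    have hzt : (φ (t.toNNReal • x + s.toNNReal • y)).toReal ≤
        t * (φ x).toReal + s * (φ y).toReal := by
      have h1 : ((t.toNNReal : ℝ≥0∞) * φ x + (s.toNNReal : ℝ≥0∞) * φ y).toReal
          = t * (φ x).toReal + s * (φ y).toReal := by
        rw [ENNReal.toReal_add (ENNReal.mul_ne_top ENNReal.coe_ne_top hx)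
          (ENNReal.mul_ne_top ENNReal.coe_ne_top hy), ENNReal.toReal_mul, ENNReal.toReal_mul]
        simp [Real.coe_toNNReal _ ht, Real.coe_toNNReal _ hs]
      rw [← h1]
      exact ENNReal.toReal_mono htop hφz
    calc ENNReal.ofReal ((t • w + s • w') i
            + (φ (t.toNNReal • x + s.toNNReal • y)).toReal)
        ≤ ENNReal.ofReal (t * (w i + (φ x).toReal) + s * (w' i + (φ y).toReal)) := by
          apply ENNReal.ofReal_le_ofReal
          simp only [Pi.add_apply, Pi.smul_apply, smul_eq_mul]
          nlinarith [hzt]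
      _ ≤ ENNReal.ofReal (t * (w i + (φ x).toReal))
            + ENNReal.ofReal (s * (w' i + (φ y).toReal)) := ENNReal.ofReal_add_le
      _ = ENNReal.ofReal t * ENNReal.ofReal (w i + (φ x).toReal)
            + ENNReal.ofReal s * ENNReal.ofReal (w' i + (φ y).toReal) := by
          rw [ENNReal.ofReal_mul ht, ENNReal.ofReal_mul hs]
      _ ≤ ENNReal.ofReal t * ψ i x + ENNReal.ofReal s * ψ i y := by
          gcongr
          · exact hCx i
          · exact hCy i
      _ = ψ i (t.toNNReal • x + s.toNNReal • y) := by rw [hψz]; rfl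
  -- the open positive orthant
  set O : Set (Fin n → ℝ) := Set.pi Set.univ (fun _ => Set.Ioi (0 : ℝ)) with hOdef
  have hOopen : IsOpen O := isOpen_set_pi Set.finite_univ (fun _ _ => isOpen_Ioi)
  have hOconv : Convex ℝ O := convex_pi (fun _ _ => convex_Ioi 0)
  have hOmem : ∀ u : Fin n → ℝ, (∀ i, 0 < u i) → u ∈ O := by
    intro u hu
    intro i _
    exact hu i
  -- disjointness
  have hdisj : Disjoint O W := by
    rw [Set.disjoint_left]
    rintro w hwO ⟨x, hx, hC⟩
    obtain ⟨i₀, hi₀⟩ := Finite.exists_min (fun i => ψ i x)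
    have h1 : ψ i₀ x ≤ φ x := le_trans (le_iInf hi₀) (hle x)
    have h2 : ENNReal.ofReal (w i₀ + (φ x).toReal) ≤ φ x := (hC i₀).trans h1
    have h3 : w i₀ + (φ x).toReal ≤ (φ x).toReal :=
      (ENNReal.ofReal_le_iff_le_toReal hx).mp h2
    have h4 : 0 < w i₀ := hwO i₀ (Set.mem_univ i₀)
    linarith
  -- separation
  obtain ⟨f, c, hfO, hfW⟩ := geometric_hahn_banach_open hOconv hOopen hWconv hdisj
  -- coefficients
  set a : Fin n → ℝ := fun i => -f (Pi.single i 1) with hadef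
  have hrepr : ∀ w : Fin n → ℝ, f w = -∑ i, w i * a i := by
    intro w
    have h1 : w = ∑ i, w i • (Pi.single i (1 : ℝ) : Fin n → ℝ) := by
      have h2 : ∑ i, w i • (Pi.single i (1 : ℝ) : Fin n → ℝ) = ∑ i, Pi.single i (w i) :=
        Finset.sum_congr rfl fun i _ => by rw [← Pi.single_smul, smul_eq_mul, mul_one]
      rw [h2, Finset.univ_sum_single]
    calc f w = f (∑ i, w i • (Pi.single i (1 : ℝ) : Fin n → ℝ)) := by rw [← h1]
      _ = ∑ i, w i * f (Pi.single i 1) := by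
          rw [map_sum]
          exact Finset.sum_congr rfl fun i _ => by rw [map_smul, smul_eq_mul]
      _ = -∑ i, w i * a i := by
          rw [← Finset.sum_neg_distrib]
          exact Finset.sum_congr rfl fun i _ => by rw [hadef]; ring
  have hone : (fun _ => (1 : ℝ)) ∈ O := hOmem _ (fun _ => one_pos)
  set S := ∑ i, a i with hS
  -- a is nonnegative
  have hfvec : ∀ (i : Fin n) (T : ℝ),
      f (fun j => if j = i then 1 + T else 1) = -(S + T * a i) := by
    intro i T
    rw [hrepr]
    congr 1
    calc ∑ j, (if j = i then 1 + T else 1) * a j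
        = ∑ j, (a j + if j = i then T * a j else 0) := by
          refine Finset.sum_congr rfl fun j _ => ?_
          by_cases h : j = i
          · rw [if_pos h, if_pos h]; ring
          · rw [if_neg h, if_neg h]; ring
      _ = S + T * a i := by
          rw [Finset.sum_add_distrib, Finset.sum_ite_eq' Finset.univ i (fun j => T * a j)]
          simp [hS]
  have ha_nonneg : ∀ i, 0 ≤ a i := by
    intro i
    by_contra hneg
    push_neg at hneg
    set T := max 1 ((c + S) / (-(a i)) + 1) with hT
    have hT1 : (1 : ℝ) ≤ T := le_max_left _ _
    have hmem : (fun j => if j = i then 1 + T else 1) ∈ O := by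
      apply hOmem
      intro j
      by_cases h : j = i
      · rw [if_pos h]; linarith
      · rw [if_neg h]; exact one_pos
    have hlt := hfO _ hmem
    rw [hfvec] at hlt
    have h2 : (c + S) / (-(a i)) + 1 ≤ T := le_max_right _ _
    have h3 : (c + S) / (-(a i)) < T := by linarith
    have h4 : c + S < T * (-(a i)) := (div_lt_iff₀ (by linarith)).mp h3
    linarith
  have hS_nonneg : 0 ≤ S := Finset.sum_nonneg fun i _ => ha_nonneg i
  have hS_pos : 0 < S := by
    rcases hS_nonneg.lt_or_eq with h | h
    · exact h
    · exfalso
      have hall : ∀ i ∈ Finset.univ, a i = 0 :=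
        (Finset.sum_eq_zero_iff_of_nonneg (fun i _ => ha_nonneg i)).mp h.symm
      have h2 : c ≤ f 0 := hfW _ hW0
      rw [map_zero] at h2
      have h1 : f (fun _ => (1 : ℝ)) < c := hfO _ hone
      have e1 : f (fun _ => (1 : ℝ)) = 0 := by
        rw [hrepr]
        simp only [neg_eq_zero]
        exact Finset.sum_eq_zero fun i hi => by rw [hall i hi, mul_zero]
      rw [e1] at h1
      linarith
  have hSne : S ≠ 0 := ne_of_gt hS_pos
  -- c is nonnegative
  have hc0 : 0 ≤ c := by
    by_contra hc
    push_neg at hc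
    set ε := -c / (2 * S) with hε
    have hε0 : 0 < ε := div_pos (by linarith) (by linarith)
    have hmem : (fun _ => ε) ∈ O := hOmem _ fun _ => hε0
    have hlt := hfO _ hmem
    have e : ∑ i, (fun _ => ε) i * a i = ε * S := by
      simp only [hS, Finset.mul_sum]
    rw [hrepr, e] at hlt
    have h5 : ε * S = -c / 2 := by
      rw [hε]
      field_simp
    rw [h5] at hlt
    linarith
  -- key inequality on W
  have hWle : ∀ w ∈ W, ∑ i, a i * w i ≤ 0 := by
    intro w hw
    have h1 : c ≤ f w := hfW w hw
    rw [hrepr w] at h1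
    have h2 : ∑ i, a i * w i = ∑ i, w i * a i :=
      Finset.sum_congr rfl fun i _ => mul_comm _ _
    rw [h2]
    linarith
  -- the normalized coefficients
  set b : Fin n → ℝ≥0 := fun i => ⟨a i / S, div_nonneg (ha_nonneg i) hS_nonneg⟩ with hbdef
  have hb_coe : ∀ i, (b i : ℝ) = a i / S := fun i => rfl
  have hb_sum : ∑ i, b i = 1 := by
    have h1 : ((∑ i, b i : ℝ≥0) : ℝ) = 1 := by
      rw [NNReal.coe_sum]
      have h2 : ∑ i, ((b i : ℝ)) = ∑ i, a i / S :=
        Finset.sum_congr rfl fun i _ => hb_coe i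
      rw [h2, ← Finset.sum_div, ← hS, div_self hSne]
    exact_mod_cast h1
  have hb_zero : ∀ i, a i = 0 → b i = 0 := by
    intro i h
    apply NNReal.coe_injective
    rw [hb_coe, h]
    simp
  -- main upper bound
  have main : ∀ x : D, ∑ i, (b i : ℝ≥0∞) * ψ i x ≤ φ x := by
    intro x
    rcases eq_or_ne (φ x) ∞ with hx | hx
    · rw [hx]; exact le_top
    have hwM : ∀ M : ℝ,
        (fun i => if ψ i x = ∞ then M else (ψ i x).toReal - (φ x).toReal) ∈ W := by
      intro M
      refine ⟨x, hx, fun i => ?_⟩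
      show ENNReal.ofReal ((if ψ i x = ∞ then M else (ψ i x).toReal - (φ x).toReal)
        + (φ x).toReal) ≤ ψ i x
      rcases eq_or_ne (ψ i x) ∞ with hψi | hψi
      · rw [if_pos hψi, hψi]; exact le_top
      · rw [if_neg hψi, sub_add_cancel, ENNReal.ofReal_toReal hψi]
    -- coefficients at infinite coordinates vanish
    have hzero : ∀ i₀, ψ i₀ x = ∞ → a i₀ = 0 := by
      intro i₀ hpsitop
      by_contra hne
      have hpos : 0 < a i₀ := (ha_nonneg i₀).lt_of_ne (Ne.symm hne)
      set M := (S * (φ x).toReal + 1) / a i₀ with hM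
      have hM0 : 0 ≤ M := by positivity
      set wM : Fin n → ℝ := fun i => if ψ i x = ∞ then M else (ψ i x).toReal - (φ x).toReal
        with hwMdef
      have hsum : ∑ i, a i * wM i ≤ 0 := hWle wM (hwM M)
      have hterm : ∀ i ∈ Finset.univ.erase i₀, -(a i * (φ x).toReal) ≤ a i * wM i := by
        intro i _
        have h1 : -(φ x).toReal ≤ wM i := by
          show -(φ x).toReal ≤ if ψ i x = ∞ then M else (ψ i x).toReal - (φ x).toReal
          rcases eq_or_ne (ψ i x) ∞ with h | h
          · rw [if_pos h]
            have h5 : (0:ℝ) ≤ (φ x).toReal := ENNReal.toReal_nonneg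
            linarith
          · rw [if_neg h]
            have h5 : (0:ℝ) ≤ (ψ i x).toReal := ENNReal.toReal_nonneg
            linarith
        calc -(a i * (φ x).toReal) = a i * (-(φ x).toReal) := by ring
          _ ≤ a i * wM i := mul_le_mul_of_nonneg_left h1 (ha_nonneg i)
      have hsplit : a i₀ * wM i₀ + ∑ i ∈ Finset.univ.erase i₀, a i * wM i
          = ∑ i, a i * wM i := Finset.add_sum_erase _ (fun i => a i * wM i) (Finset.mem_univ i₀)
      have hwMi₀ : wM i₀ = M := by
        show (if ψ i₀ x = ∞ then M else (ψ i₀ x).toReal - (φ x).toReal) = M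
        rw [if_pos hpsitop]
      have herase : -(S * (φ x).toReal) ≤ ∑ i ∈ Finset.univ.erase i₀, a i * wM i := by
        calc -(S * (φ x).toReal)
            ≤ -(∑ i ∈ Finset.univ.erase i₀, a i * (φ x).toReal) := by
              rw [neg_le_neg_iff, ← Finset.sum_mul]
              apply mul_le_mul_of_nonneg_right _ ENNReal.toReal_nonneg
              exact Finset.sum_le_sum_of_subset_of_nonneg (Finset.subset_univ _)
                (fun i _ _ => ha_nonneg i)
          _ = ∑ i ∈ Finset.univ.erase i₀, -(a i * (φ x).toReal) :=
              (Finset.sum_neg_distrib _).symm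
          _ ≤ ∑ i ∈ Finset.univ.erase i₀, a i * wM i := Finset.sum_le_sum hterm
      have hfinal : a i₀ * M ≤ S * (φ x).toReal := by
        rw [← hsplit, hwMi₀] at hsum
        linarith
      have heq : a i₀ * M = S * (φ x).toReal + 1 := by
        rw [hM, mul_comm, div_mul_cancel₀ _ (ne_of_gt hpos)]
      linarith
    -- M = 0 gives the finite-part inequality
    have hsum0 : ∑ i, a i * (if ψ i x = ∞ then (0:ℝ)
        else (ψ i x).toReal - (φ x).toReal) ≤ 0 := hWle _ (hwM 0)
    have hreal : ∑ i, a i * (ψ i x).toReal ≤ S * (φ x).toReal := by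
      have heq : ∀ i ∈ Finset.univ,
          a i * ((ψ i x).toReal - (φ x).toReal)
            = a i * (if ψ i x = ∞ then (0:ℝ) else (ψ i x).toReal - (φ x).toReal) := by
        intro i _
        rcases eq_or_ne (ψ i x) ∞ with h | h
        · rw [hzero i h]; ring
        · rw [if_neg h]
      have h1 : ∑ i, a i * ((ψ i x).toReal - (φ x).toReal) ≤ 0 := by
        rw [Finset.sum_congr rfl heq]
        exact hsum0
      have h2 : ∑ i, a i * ((ψ i x).toReal - (φ x).toReal)
          = ∑ i, a i * (ψ i x).toReal - S * (φ x).toReal := by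
        rw [hS, Finset.sum_mul, ← Finset.sum_sub_distrib]
        exact Finset.sum_congr rfl fun i _ => by ring
      rw [h2] at h1
      linarith
    -- conclude in ℝ≥0∞
    have hterm2 : ∀ i ∈ Finset.univ,
        (b i : ℝ≥0∞) * ψ i x = ENNReal.ofReal ((b i : ℝ) * (ψ i x).toReal) := by
      intro i _
      rcases eq_or_ne (ψ i x) ∞ with h | h
      · rw [h, hb_zero i (hzero i h)]
        simp
      · rw [← ENNReal.ofReal_coe_nnreal, ← ENNReal.ofReal_toReal h,
          ← ENNReal.ofReal_mul (b i).coe_nonneg]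
        rw [ENNReal.toReal_ofReal ENNReal.toReal_nonneg]
    calc ∑ i, (b i : ℝ≥0∞) * ψ i x
        = ∑ i, ENNReal.ofReal ((b i : ℝ) * (ψ i x).toReal) :=
          Finset.sum_congr rfl hterm2
      _ = ENNReal.ofReal (∑ i, (b i : ℝ) * (ψ i x).toReal) :=
          (ENNReal.ofReal_sum_of_nonneg (fun i _ =>
            mul_nonneg (b i).coe_nonneg ENNReal.toReal_nonneg)).symm
      _ ≤ ENNReal.ofReal ((φ x).toReal) := by
          apply ENNReal.ofReal_le_ofReal
          have h3 : ∑ i, (b i : ℝ) * (ψ i x).toReal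
              = (∑ i, a i * (ψ i x).toReal) / S := by
            rw [Finset.sum_div]
            exact Finset.sum_congr rfl fun i _ => by rw [hb_coe]; ring
          rw [h3, div_le_iff₀ hS_pos]
          calc ∑ i, a i * (ψ i x).toReal ≤ S * (φ x).toReal := hreal
            _ = (φ x).toReal * S := by ring
      _ = φ x := ENNReal.ofReal_toReal hx
  -- conclusion
  refine ⟨b, hb_sum, fun x => ⟨?_, main x⟩⟩
  have hbsum' : ∑ i, (b i : ℝ≥0∞) = 1 := by
    rw [← ENNReal.coe_finset_sum, hb_sum, ENNReal.coe_one]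
  calc (⨅ i, ψ i x) = (∑ i, (b i : ℝ≥0∞)) * (⨅ j, ψ j x) := by rw [hbsum', one_mul]
    _ = ∑ i, (b i : ℝ≥0∞) * (⨅ j, ψ j x) := Finset.sum_mul _ _ _
    _ ≤ ∑ i, (b i : ℝ≥0∞) * ψ i x :=
        Finset.sum_le_sum fun i _ => mul_le_mul_right (iInf_le _ i) _
end

section
/- Let D be a cone carrying a compatible topology and let φ : D → ℝ≥0∞ be a homogeneous functional that is lower semicontinuous (i.e. {x | r < φ(x)} is open for every r : ℝ≥0). Then φ is superlinear (φ(a + b) ≥ φ(a) + φ(b) for all a, b) if and only if the set U_φ = {x ∈ D | 1 < φ(x)} is convex. -/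
open scoped ENNReal NNReal Topology

/-- The upper topology on `ℝ≥0`: the nontrivial open sets are the
intervals `{s | a < s}`. -/
def nnrealUpperTopology : TopologicalSpace ℝ≥0 :=
  TopologicalSpace.generateFrom {S | ∃ a : ℝ≥0, S = Set.Ioi a}

/-- Any upper-open subset of `ℝ≥0` containing `0` is everything. -/
lemma nnrealUpperTopology_mem_of_zero_mem {V : Set ℝ≥0}
    (hV : IsOpen[nnrealUpperTopology] V) (h0 : (0 : ℝ≥0) ∈ V) : ∀ r : ℝ≥0, r ∈ V := by
  induction hV with
  | basic S hS =>
      obtain ⟨a, rfl⟩ := hS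
      simp at h0
  | univ => intro r; trivial
  | inter S T _ _ ihS ihT => exact fun r => ⟨ihS h0.1 r, ihT h0.2 r⟩
  | sUnion 𝒮 _ ih =>
      obtain ⟨U, hU, h0U⟩ := h0
      exact fun r => ⟨U, hU, ih U hU h0U r⟩

lemma one_lt_inv_mul_iff' {c : ℝ≥0} (hc : c ≠ 0) {x : ℝ≥0∞} :
    1 < (c : ℝ≥0∞)⁻¹ * x ↔ (c : ℝ≥0∞) < x := by
  rw [mul_comm, ← div_eq_mul_inv,
    ENNReal.lt_div_iff_mul_lt (Or.inl (by exact_mod_cast hc)) (Or.inl ENNReal.coe_ne_top),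
    one_mul]

/-- On a cone `D` with a compatible topology, a homogeneous lower semicontinuous
functional `φ` is superlinear iff `U_φ = {x | 1 < φ x}` is convex. -/
theorem superlinear_iff_U_convex {D : Type*} [AddCommMonoid D] [Module ℝ≥0 D]
    [TopologicalSpace D]
    (htrans : ∀ a : D, Continuous fun y : D => a + y)
    (hhomothety : ∀ r : ℝ≥0, Continuous fun y : D => r • y)
    (hray : ∀ y : D, Continuous[nnrealUpperTopology, _] fun r : ℝ≥0 => r • y)
    (φ : D → ℝ≥0∞)
    (hφ_hom : ∀ (r : ℝ≥0) (a : D), φ (r • a) = (r : ℝ≥0∞) * φ a)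
    (hφ_lsc : ∀ r : ℝ≥0, IsOpen {x : D | (r : ℝ≥0∞) < φ x}) :
    (∀ a b : D, φ a + φ b ≤ φ (a + b)) ↔
      (∀ a ∈ {x : D | 1 < φ x}, ∀ b ∈ {x : D | 1 < φ x}, ∀ r : ℝ≥0, r ≤ 1 →
        r • a + (1 - r) • b ∈ {x : D | 1 < φ x}) := by
  constructor
  · -- superlinear → convex
    intro hsl a ha b hb r hr
    simp only [Set.mem_setOf_eq] at ha hb ⊢
    rcases eq_or_ne r 0 with rfl | hr0
    · simpa [hφ_hom] using hb
    · have h1 : (1 : ℝ≥0∞) = (r : ℝ≥0∞) + ((1 - r : ℝ≥0) : ℝ≥0∞) := by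
        rw [← ENNReal.coe_add, add_tsub_cancel_of_le hr, ENNReal.coe_one]
      calc (1 : ℝ≥0∞) = (r : ℝ≥0∞) * 1 + ((1 - r : ℝ≥0) : ℝ≥0∞) * 1 := by
              rw [mul_one, mul_one]; exact h1
        _ < (r : ℝ≥0∞) * φ a + ((1 - r : ℝ≥0) : ℝ≥0∞) * φ b := by
              apply ENNReal.add_lt_add_of_lt_of_le
              · exact ENNReal.mul_ne_top ENNReal.coe_ne_top (by simp)
              · exact ENNReal.mul_lt_mul_right (by exact_mod_cast hr0) ENNReal.coe_ne_top ha
              · exact mul_le_mul_right hb.le _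
        _ = φ (r • a) + φ ((1 - r) • b) := by rw [hφ_hom, hφ_hom]
        _ ≤ φ (r • a + (1 - r) • b) := hsl _ _
  · -- convex → superlinear
    intro hconv a b
    -- monotonicity: φ b ≤ φ (a + b)
    have hmono : ∀ a b : D, φ b ≤ φ (a + b) := by
      intro a b
      apply ENNReal.le_of_forall_nnreal_lt
      intro t ht
      have hc : Continuous[nnrealUpperTopology, _] (fun r : ℝ≥0 => b + r • a) :=
        @Continuous.comp ℝ≥0 D D nnrealUpperTopology _ _ _ _ (htrans b) (hray a)
      have hV := @Continuous.isOpen_preimage ℝ≥0 D nnrealUpperTopology _ _ hc _ (hφ_lsc t)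
      have h0 : (0 : ℝ≥0) ∈ (fun r : ℝ≥0 => b + r • a) ⁻¹' {x : D | (t : ℝ≥0∞) < φ x} := by
        simpa using ht
      have h1 := nnrealUpperTopology_mem_of_zero_mem hV h0 1
      simp only [Set.mem_preimage, one_smul, Set.mem_setOf_eq] at h1
      rw [add_comm] at h1
      exact h1.le
    -- key step via convexity
    have key : ∀ s t : ℝ≥0, (s : ℝ≥0∞) < φ a → (t : ℝ≥0∞) < φ b →
        (s : ℝ≥0∞) + t ≤ φ (a + b) := by
      intro s t hs ht
      rcases eq_or_ne s 0 with rfl | hs0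
      · simpa using ht.le.trans (hmono a b)
      rcases eq_or_ne t 0 with rfl | ht0
      · rw [add_comm a b]
        simpa using hs.le.trans (hmono b a)
      have hspos : 0 < s := pos_iff_ne_zero.mpr hs0
      have htpos : 0 < t := pos_iff_ne_zero.mpr ht0
      have hst : (0 : ℝ≥0) < s + t := by positivity
      have hmemA : s⁻¹ • a ∈ {x : D | 1 < φ x} := by
        simp only [Set.mem_setOf_eq, hφ_hom]
        rw [ENNReal.coe_inv hs0]
        rw [one_lt_inv_mul_iff' hs0]
        exact hs
      have hmemB : t⁻¹ • b ∈ {x : D | 1 < φ x} := by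
        simp only [Set.mem_setOf_eq, hφ_hom]
        rw [ENNReal.coe_inv ht0]
        rw [one_lt_inv_mul_iff' ht0]
        exact ht
      have hrle : s / (s + t) ≤ 1 := by
        rw [div_le_one hst]
        exact le_add_of_nonneg_right zero_le
      have hc := hconv _ hmemA _ hmemB (s / (s + t)) hrle
      have hsub : (1 : ℝ≥0) - s / (s + t) = t / (s + t) := by
        rw [eq_div_iff hst.ne', tsub_mul, one_mul, div_mul_cancel₀ _ hst.ne']
        exact add_tsub_cancel_left s t
      have heq : (s / (s + t)) • s⁻¹ • a + (1 - s / (s + t)) • t⁻¹ • b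
          = (s + t)⁻¹ • (a + b) := by
        rw [hsub, smul_smul, smul_smul, smul_add]
        congr 1
        · congr 1
          field_simp
        · congr 1
          field_simp
      rw [heq] at hc
      simp only [Set.mem_setOf_eq, hφ_hom] at hc
      rw [ENNReal.coe_inv hst.ne'] at hc
      rw [one_lt_inv_mul_iff' hst.ne'] at hc
      rw [ENNReal.coe_add] at hc
      exact hc.le
    rcases eq_or_ne (φ a) 0 with h0 | ha0
    · rw [h0, zero_add]; exact hmono a b
    rcases eq_or_ne (φ b) 0 with h0 | hb0
    · rw [h0, add_zero, add_comm a b]; exact hmono b a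
    apply ENNReal.le_of_forall_nnreal_lt
    intro r hr
    obtain ⟨y', hy', z', hz', hr'⟩ := ENNReal.exists_lt_add_of_lt_add hr ha0 hb0
    have hyt : y' ≠ ⊤ := (hy'.trans_le le_top).ne
    have hzt : z' ≠ ⊤ := (hz'.trans_le le_top).ne
    have hs : (y'.toNNReal : ℝ≥0∞) < φ a := by rwa [ENNReal.coe_toNNReal hyt]
    have ht : (z'.toNNReal : ℝ≥0∞) < φ b := by rwa [ENNReal.coe_toNNReal hzt]
    refine hr'.le.trans ?_
    rw [← ENNReal.coe_toNNReal hyt, ← ENNReal.coe_toNNReal hzt]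
    exact key _ _ hs ht
end

section
/- Minkowski functional of an open set: Let D be a cone carrying a compatible topology and let U ⊆ D be a proper open subset (U open, U ≠ D). Then the upper Minkowski functional φ_U : D → ℝ≥0∞ defined by φ_U(y) = ⨆ (r : ℝ≥0) (_ : 0 < r ∧ y ∈ r • U), (r : ℝ≥0∞) (with supremum 0 over the empty set) is homogeneous and lower semicontinuous, and moreover {y ∈ D | 1 < φ_U(y)} = U. -/
open scoped ENNReal NNReal Topology Pointwise

private lemma upper_upward {V : Set ℝ≥0}
    (hV : TopologicalSpace.GenerateOpen {S | ∃ a : ℝ≥0, S = Set.Ioi a} V) :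
    ∀ x ∈ V, ∀ y, x ≤ y → y ∈ V := by
  induction hV with
  | basic s hs => obtain ⟨a, rfl⟩ := hs; exact fun x hx y hxy => lt_of_lt_of_le hx hxy
  | univ => intros; trivial
  | inter s t _ _ ihs iht => exact fun x hx y hxy => ⟨ihs x hx.1 y hxy, iht x hx.2 y hxy⟩
  | sUnion S _ ih =>
      rintro x ⟨s, hs, hx⟩ y hxy; exact ⟨s, hs, ih s hs x hx y hxy⟩

private lemma upper_lowerbd {V : Set ℝ≥0}
    (hV : TopologicalSpace.GenerateOpen {S | ∃ a : ℝ≥0, S = Set.Ioi a} V) :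
    ∀ x ∈ V, 0 < x → ∃ a, a < x ∧ Set.Ioi a ⊆ V := by
  induction hV with
  | basic s hs => obtain ⟨a, rfl⟩ := hs; exact fun x hx _ => ⟨a, hx, subset_rfl⟩
  | univ => exact fun x _ hx => ⟨0, hx, fun _ _ => trivial⟩
  | inter s t _ _ ihs iht =>
      intro x hx hx0
      obtain ⟨a, ha, has⟩ := ihs x hx.1 hx0
      obtain ⟨b, hb, hbt⟩ := iht x hx.2 hx0
      exact ⟨max a b, max_lt ha hb, fun z hz =>
        ⟨has (lt_of_le_of_lt (le_max_left a b) hz),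
         hbt (lt_of_le_of_lt (le_max_right a b) hz)⟩⟩
  | sUnion S _ ih =>
      rintro x ⟨s, hs, hx⟩ hx0
      obtain ⟨a, ha, has⟩ := ih s hs x hx hx0
      exact ⟨a, ha, fun z hz => ⟨s, hs, has hz⟩⟩

/-- The upper Minkowski functional of a proper open subset `U` of a cone `D`
with a compatible topology is homogeneous, lower semicontinuous, and its
set `{y | 1 < φ_U y}` is `U` itself. -/
theorem minkowski_functional_of_open {D : Type*} [AddCommMonoid D] [Module ℝ≥0 D]
    [TopologicalSpace D]
    (htrans : ∀ a : D, Continuous fun y : D => a + y)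
    (hhomothety : ∀ r : ℝ≥0, Continuous fun y : D => r • y)
    (hray : ∀ y : D, Continuous[nnrealUpperTopology, _] fun r : ℝ≥0 => r • y)
    (U : Set D) (hU : IsOpen U) (hUproper : U ≠ Set.univ)
    (φ : D → ℝ≥0∞)
    (hφ : ∀ y : D, φ y = ⨆ (r : ℝ≥0) (_ : 0 < r ∧ y ∈ r • U), (r : ℝ≥0∞)) :
    (∀ (r : ℝ≥0) (a : D), φ (r • a) = (r : ℝ≥0∞) * φ a) ∧
    (∀ r : ℝ≥0, IsOpen {x : D | (r : ℝ≥0∞) < φ x}) ∧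
    {y : D | 1 < φ y} = U := by
  -- ray preimages of `U` are generate-open
  have hrayopen : ∀ y : D,
      TopologicalSpace.GenerateOpen {S | ∃ a : ℝ≥0, S = Set.Ioi a}
        ((fun r : ℝ≥0 => r • y) ⁻¹' U) := fun y =>
    (@continuous_def ℝ≥0 D nnrealUpperTopology _ _).mp (hray y) U hU
  -- 0 ∉ U
  have hzero : (0 : D) ∉ U := by
    intro h0
    apply hUproper
    ext y
    simp only [Set.mem_univ, iff_true]
    have h0' : (0 : ℝ≥0) ∈ (fun r : ℝ≥0 => r • y) ⁻¹' U := by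
      simpa [zero_smul] using h0
    have := upper_upward (hrayopen y) 0 h0' 1 zero_le_one
    simpa using this
  -- basic estimate: membership gives lower bound on φ
  have hle : ∀ (y : D) (s : ℝ≥0), 0 < s → y ∈ s • U → (s : ℝ≥0∞) ≤ φ y := by
    intro y s hs hmem
    rw [hφ y]
    exact le_iSup₂ (f := fun (r : ℝ≥0) (_ : 0 < r ∧ y ∈ r • U) => (r : ℝ≥0∞)) s ⟨hs, hmem⟩
  -- extraction from strict inequality
  have hlt : ∀ (y : D) (c : ℝ≥0∞), c < φ y →
      ∃ s : ℝ≥0, (0 < s ∧ y ∈ s • U) ∧ c < (s : ℝ≥0∞) := by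
    intro y c hc
    rw [hφ y] at hc
    obtain ⟨s, hs⟩ := lt_iSup_iff.mp hc
    by_cases hP : 0 < s ∧ y ∈ s • U
    · rw [iSup_pos hP] at hs; exact ⟨s, hP, hs⟩
    · rw [iSup_neg hP] at hs; exact absurd hs (by simp)
  -- φ 0 = 0
  have hφ0 : φ 0 = 0 := by
    rw [hφ 0]
    refine le_antisymm (iSup₂_le fun r hr => absurd hr ?_) zero_le
    rintro ⟨hr, u, hu, hru⟩
    apply hzero
    have : u = 0 := by
      have := congrArg (fun z => r⁻¹ • z) hru
      simpa [inv_smul_smul₀ hr.ne'] using this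
    rwa [this] at hu
  refine ⟨?_, ?_, ?_⟩
  · -- homogeneity
    intro r a
    rcases eq_or_lt_of_le (zero_le : 0 ≤ r) with hr | hr
    · simp [← hr, hφ0]
    · apply le_antisymm
      · rw [hφ (r • a)]
        refine iSup₂_le fun s hs => ?_
        obtain ⟨hspos, u, hu, hsu⟩ := hs
        have hmem : a ∈ (r⁻¹ * s) • U := by
          refine ⟨u, hu, ?_⟩
          show (r⁻¹ * s) • u = a
          rw [mul_smul]
          have := congrArg (fun z => r⁻¹ • z) hsu
          simpa [inv_smul_smul₀ hr.ne'] using this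
        have h1 : ((r⁻¹ * s : ℝ≥0) : ℝ≥0∞) ≤ φ a :=
          hle a _ (by positivity) hmem
        calc (s : ℝ≥0∞) = (r : ℝ≥0∞) * ((r⁻¹ * s : ℝ≥0) : ℝ≥0∞) := by
              rw [← ENNReal.coe_mul, mul_inv_cancel_left₀ hr.ne']
          _ ≤ (r : ℝ≥0∞) * φ a := mul_le_mul_right h1 _
      · rw [hφ a, ENNReal.mul_iSup]
        refine iSup_le fun t => ?_
        rw [ENNReal.mul_iSup]
        refine iSup_le fun ht => ?_
        obtain ⟨htpos, u, hu, htu⟩ := ht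
        have hmem : r • a ∈ (r * t) • U := ⟨u, hu, by show (r * t) • u = r • a; rw [mul_smul]; exact congrArg (r • ·) htu⟩
        have := hle (r • a) (r * t) (by positivity) hmem
        rwa [ENNReal.coe_mul] at this
  · -- lower semicontinuity
    intro c
    have : {x : D | (c : ℝ≥0∞) < φ x} = ⋃ (s : ℝ≥0) (_ : c < s), s • U := by
      ext x
      simp only [Set.mem_setOf_eq, Set.mem_iUnion]
      constructor
      · intro hx
        obtain ⟨s, ⟨_, hmem⟩, hcs⟩ := hlt x c hx
        exact ⟨s, ENNReal.coe_lt_coe.mp hcs, hmem⟩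
      · rintro ⟨s, hcs, hmem⟩
        exact lt_of_lt_of_le (ENNReal.coe_lt_coe.mpr hcs)
          (hle x s (lt_of_le_of_lt (zero_le : 0 ≤ c) hcs) hmem)
    rw [this]
    refine isOpen_iUnion fun s => isOpen_iUnion fun hcs => ?_
    have hs : s ≠ 0 := (lt_of_le_of_lt (zero_le : 0 ≤ c) hcs).ne'
    have : s • U = (fun y : D => s⁻¹ • y) ⁻¹' U := by
      ext y
      exact Set.mem_smul_set_iff_inv_smul_mem₀ hs _ _
    rw [this]
    exact hU.preimage (hhomothety s⁻¹)
  · -- the level set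
    ext y
    simp only [Set.mem_setOf_eq]
    constructor
    · intro hy
      obtain ⟨s, ⟨hspos, hmem⟩, hs1⟩ := hlt y 1 hy
      have hs1' : (1 : ℝ≥0) < s := by exact_mod_cast hs1
      have : s⁻¹ • y ∈ U := (Set.mem_smul_set_iff_inv_smul_mem₀ hspos.ne' _ _).mp hmem
      have h1 : (1 : ℝ≥0) ∈ (fun r : ℝ≥0 => r • y) ⁻¹' U := by
        refine upper_upward (hrayopen y) s⁻¹ this 1 ?_
        rw [inv_le_one_iff₀]
        exact Or.inr hs1'.le
      simpa using h1
    · intro hy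
      have h1 : (1 : ℝ≥0) ∈ (fun r : ℝ≥0 => r • y) ⁻¹' U := by simpa using hy
      obtain ⟨a, ha, haV⟩ := upper_lowerbd (hrayopen y) 1 h1 one_pos
      obtain ⟨t, hta, ht2⟩ := exists_between ha
      have htpos : 0 < t := lt_of_le_of_lt (zero_le : 0 ≤ a) hta
      have htU : t • y ∈ U := haV hta
      have hmem : y ∈ t⁻¹ • U := by
        rw [Set.mem_smul_set_iff_inv_smul_mem₀ (by positivity : (t : ℝ≥0)⁻¹ ≠ 0) ]
        rwa [inv_inv]
      have hinv : (1 : ℝ≥0) < t⁻¹ := one_lt_inv₀ htpos |>.mpr ht2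
      calc (1 : ℝ≥0∞) < (t⁻¹ : ℝ≥0) := by exact_mod_cast hinv
        _ ≤ φ y := hle y t⁻¹ (by positivity) hmem
end

section
/- Let D be a cone carrying a topology and let φ : D → ℝ≥0∞ be a homogeneous lower semicontinuous functional. Then U_φ = {y ∈ D | 1 < φ(y)} is an open set not containing 0, and the upper Minkowski functional of U_φ recovers φ: for every y ∈ D, ⨆ (r : ℝ≥0) (_ : 0 < r ∧ y ∈ r • U_φ), (r : ℝ≥0∞) = φ(y). -/
open scoped ENNReal NNReal Pointwise

/-- For a homogeneous lower semicontinuous functional `φ` on a cone `D` with a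
topology, the set `U_φ = {y | 1 < φ y}` is open, does not contain `0`, and the
upper Minkowski functional of `U_φ` recovers `φ`. -/
theorem minkowski_recovers_functional {D : Type*} [AddCommMonoid D] [Module ℝ≥0 D]
    [TopologicalSpace D]
    (φ : D → ℝ≥0∞)
    (hφ_hom : ∀ (r : ℝ≥0) (a : D), φ (r • a) = (r : ℝ≥0∞) * φ a)
    (hφ_lsc : ∀ r : ℝ≥0, IsOpen {x : D | (r : ℝ≥0∞) < φ x}) :
    IsOpen {y : D | 1 < φ y} ∧ (0 : D) ∉ {y : D | 1 < φ y} ∧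
    ∀ y : D, (⨆ (r : ℝ≥0) (_ : 0 < r ∧ y ∈ r • {y : D | 1 < φ y}), (r : ℝ≥0∞)) = φ y := by
  have h0 : φ 0 = 0 := by
    have := hφ_hom 0 0
    simpa using this
  have key : ∀ (r : ℝ≥0) (y : D), 0 < r →
      (y ∈ r • {y : D | 1 < φ y} ↔ (r : ℝ≥0∞) < φ y) := by
    intro r y hr
    constructor
    · rintro ⟨u, hu, rfl⟩
      rw [hφ_hom]
      calc (r : ℝ≥0∞) = r * 1 := (mul_one _).symm
        _ < r * φ u := by
          exact (ENNReal.mul_lt_mul_iff_right (by exact_mod_cast hr.ne') ENNReal.coe_ne_top).2 hu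
    · intro hy
      refine ⟨r⁻¹ • y, ?_, ?_⟩
      · show 1 < φ (r⁻¹ • y)
        rw [hφ_hom, ENNReal.coe_inv hr.ne']
        have hrne : (r : ℝ≥0∞) ≠ 0 := by exact_mod_cast hr.ne'
        calc (1 : ℝ≥0∞) = (r : ℝ≥0∞)⁻¹ * r := by
              rw [ENNReal.inv_mul_cancel hrne ENNReal.coe_ne_top]
          _ < (r : ℝ≥0∞)⁻¹ * φ y := by
              exact (ENNReal.mul_lt_mul_iff_right (ENNReal.inv_ne_zero.2 ENNReal.coe_ne_top)
                (ENNReal.inv_ne_top.2 hrne)).2 hy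
      · show r • r⁻¹ • y = y
        rw [smul_smul, mul_inv_cancel₀ hr.ne', one_smul]
  refine ⟨hφ_lsc 1, by simp [h0], fun y => ?_⟩
  apply le_antisymm
  · refine iSup₂_le fun r hr => ?_
    exact ((key r y hr.1).1 hr.2).le
  · refine le_of_forall_lt fun c hc => ?_
    obtain ⟨r, hcr, hrφ⟩ := ENNReal.lt_iff_exists_nnreal_btwn.1 hc
    have hr0 : 0 < r := by
      by_contra h
      simp [le_antisymm (not_lt.1 h) (zero_le : 0 ≤ r)] at hcr
    exact hcr.trans_le (le_iSup₂ (f := fun (r : ℝ≥0)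
      (_ : 0 < r ∧ y ∈ r • {y : D | 1 < φ y}) => (r : ℝ≥0∞)) r
      ⟨hr0, (key r y hr0).2 hrφ⟩)
end

section
/- Let C, D be cones and B : C → D → ℝ≥0∞ a bilinear map, and endow D with the weak upper topology w(D,C). Then every homogeneous functional ψ : D → ℝ≥0∞ that is lower semicontinuous for w(D,C) is the pointwise supremum of the finite pointwise infima of evaluation functionals lying below it: for every y ∈ D, ψ(y) = ⨆ (F : Finset C) (_ : F.Nonempty ∧ ∀ z ∈ D, (⨅ x ∈ F, B x z) ≤ ψ(z)), ⨅ x ∈ F, B x y. -/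
open scoped ENNReal NNReal Topology

private lemma exists_finset_of_generateOpen {C D : Type*}
    (B : C → D → ℝ≥0∞) {U : Set D}
    (hU : TopologicalSpace.GenerateOpen
      {S | ∃ (x : C) (s : ℝ≥0), S = {y : D | (s : ℝ≥0∞) < B x y}} U) :
    ∀ y ∈ U, ∃ P : Finset (C × ℝ≥0),
      (∀ p ∈ P, (p.2 : ℝ≥0∞) < B p.1 y) ∧
      (∀ z : D, (∀ p ∈ P, (p.2 : ℝ≥0∞) < B p.1 z) → z ∈ U) := by
  classical
  induction hU with
  | basic S hS =>
      intro y hy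
      obtain ⟨x, s, rfl⟩ := hS
      exact ⟨{(x, s)}, by simpa using hy, fun z hz => by simpa using hz (x, s) (by simp)⟩
  | univ => exact fun y _ => ⟨∅, by simp, by simp⟩
  | inter U V hU hV ihU ihV =>
      intro y hy
      obtain ⟨P1, h1, h1'⟩ := ihU y hy.1
      obtain ⟨P2, h2, h2'⟩ := ihV y hy.2
      refine ⟨P1 ∪ P2, ?_, ?_⟩
      · intro p hp
        rcases Finset.mem_union.1 hp with h | h
        exacts [h1 p h, h2 p h]
      · intro z hz
        exact ⟨h1' z fun p hp => hz p (Finset.mem_union_left _ hp),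
               h2' z fun p hp => hz p (Finset.mem_union_right _ hp)⟩
  | sUnion 𝒮 h ih =>
      intro y hy
      obtain ⟨S, hS, hyS⟩ := hy
      obtain ⟨P, hP, hP'⟩ := ih S hS y hyS
      exact ⟨P, hP, fun z hz => ⟨S, hS, hP' z hz⟩⟩

/-- On `D` with the weak upper topology `w(D,C)` induced by a bilinear map
`B : C → D → ℝ≥0∞`, every homogeneous lower semicontinuous functional `ψ` is
the pointwise sup of the finite pointwise infima of evaluation functionals
`B x` lying below it. -/
theorem homogeneous_lsc_eq_sup_finite_infs
    {C D : Type*} [AddCommMonoid C] [Module ℝ≥0 C] [AddCommMonoid D] [Module ℝ≥0 D]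
    (B : C → D → ℝ≥0∞)
    (hB_addl : ∀ x x' : C, ∀ y : D, B (x + x') y = B x y + B x' y)
    (hB_smull : ∀ (r : ℝ≥0) (x : C) (y : D), B (r • x) y = (r : ℝ≥0∞) * B x y)
    (hB_addr : ∀ (x : C) (y y' : D), B x (y + y') = B x y + B x y')
    (hB_smulr : ∀ (r : ℝ≥0) (x : C) (y : D), B x (r • y) = (r : ℝ≥0∞) * B x y)
    (ψ : D → ℝ≥0∞)
    (hψ_hom : ∀ (r : ℝ≥0) (a : D), ψ (r • a) = (r : ℝ≥0∞) * ψ a)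
    (hψ_lsc : ∀ r : ℝ≥0,
      IsOpen[TopologicalSpace.generateFrom
        {S | ∃ (x : C) (s : ℝ≥0), S = {y : D | (s : ℝ≥0∞) < B x y}}]
        {y : D | (r : ℝ≥0∞) < ψ y}) :
    ∀ y : D, ψ y =
      ⨆ (F : Finset C) (_ : F.Nonempty ∧ ∀ z : D, (⨅ x ∈ F, B x z) ≤ ψ z),
        ⨅ x ∈ F, B x y := by
  classical
  intro y
  refine le_antisymm ?_ (iSup_le fun F => iSup_le fun hF => hF.2 y)
  refine ENNReal.le_of_forall_nnreal_lt fun r hr => ?_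
  rcases eq_or_ne r 0 with rfl | hr0
  · exact zero_le
  have hψ0 : ψ 0 = 0 := by simpa using hψ_hom 0 y
  obtain ⟨P, hPy, hPU⟩ := exists_finset_of_generateOpen B (hψ_lsc r) y hr
  have hPne : P.Nonempty := by
    rcases P.eq_empty_or_nonempty with rfl | h
    · exfalso
      have h0 := hPU 0 (by simp)
      simp only [Set.mem_setOf_eq, hψ0] at h0
      exact (ENNReal.not_lt_zero h0)
    · exact h
  have hex : ∀ p : {p // p ∈ P}, ∃ t : ℝ≥0,
      p.1.2 < t ∧ (t : ℝ≥0∞) < B p.1.1 y := by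
    intro p
    obtain ⟨c, hc1, hc2⟩ := exists_between (hPy p.1 p.2)
    have hcne : c ≠ ∞ := ne_top_of_lt hc2
    refine ⟨c.toNNReal, ?_, ?_⟩
    · rw [← ENNReal.coe_lt_coe, ENNReal.coe_toNNReal hcne]; exact hc1
    · rw [ENNReal.coe_toNNReal hcne]; exact hc2
  set sp : {p // p ∈ P} → ℝ≥0 := fun p => (hex p).choose with hspdef
  have hsp1 : ∀ p : {p // p ∈ P}, p.1.2 < sp p := fun p => (hex p).choose_spec.1
  have hsp2 : ∀ p : {p // p ∈ P}, (sp p : ℝ≥0∞) < B p.1.1 y := fun p => (hex p).choose_spec.2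
  have hsp0 : ∀ p, sp p ≠ 0 := fun p => (lt_of_le_of_lt zero_le (hsp1 p)).ne'
  have hdm : ∀ p : {p // p ∈ P}, ((r / sp p : ℝ≥0) : ℝ≥0∞) * (sp p : ℝ≥0∞) = (r : ℝ≥0∞) := by
    intro p
    rw [← ENNReal.coe_mul, div_mul_cancel₀ _ (hsp0 p)]
  set F : Finset C := P.attach.image (fun p => (r / sp p) • p.1.1) with hFdef
  have hFne : F.Nonempty := (Finset.attach_nonempty_iff.mpr hPne).image _
  have key : ∀ z : D, (⨅ x ∈ F, B x z) ≤ ψ z := by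
    intro z
    by_contra hcon
    push_neg at hcon
    set m := ⨅ x ∈ F, B x z with hm
    have hmle : ∀ p : {p // p ∈ P},
        m ≤ ((r / sp p : ℝ≥0) : ℝ≥0∞) * B p.1.1 z := by
      intro p
      have hmem : (r / sp p) • p.1.1 ∈ F :=
        Finset.mem_image_of_mem _ (Finset.mem_attach _ _)
      have := iInf₂_le (f := fun x (_ : x ∈ F) => B x z) _ hmem
      rwa [hB_smull] at this
    have hψzt : ψ z ≠ ∞ := ne_top_of_lt hcon
    obtain ⟨c, hcm, hcψ⟩ : ∃ c : ℝ≥0, (r : ℝ≥0∞) < (c : ℝ≥0∞) * m ∧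
        (c : ℝ≥0∞) * ψ z ≤ (r : ℝ≥0∞) := by
      rcases eq_or_ne (ψ z) 0 with hz0 | hz0
      · have hm0 : m ≠ 0 := by rw [hz0] at hcon; exact hcon.ne'
        rcases eq_or_ne m ∞ with hmtop | hmtop
        · exact ⟨1, by simp [hmtop, ENNReal.coe_lt_top], by simp [hz0]⟩
        · refine ⟨(((r : ℝ≥0∞) + 1) / m).toNNReal, ?_, by simp [hz0]⟩
          have hfin : ((r : ℝ≥0∞) + 1) / m ≠ ∞ :=
            (ENNReal.div_lt_top (by simp) hm0).ne
          rw [ENNReal.coe_toNNReal hfin, ENNReal.div_mul_cancel hm0 hmtop]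
          exact ENNReal.lt_add_right ENNReal.coe_ne_top one_ne_zero
      · set w := (ψ z).toNNReal with hw
        have hwz : (w : ℝ≥0∞) = ψ z := ENNReal.coe_toNNReal hψzt
        have hw0 : w ≠ 0 := by
          simp only [hw, ne_eq, ENNReal.toNNReal_eq_zero_iff]
          tauto
        refine ⟨r / w, ?_, ?_⟩
        · have heq : ((r / w : ℝ≥0) : ℝ≥0∞) * ψ z = (r : ℝ≥0∞) := by
            rw [← hwz, ← ENNReal.coe_mul, div_mul_cancel₀ _ hw0]
          calc (r : ℝ≥0∞) = ((r / w : ℝ≥0) : ℝ≥0∞) * ψ z := heq.symm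
            _ < ((r / w : ℝ≥0) : ℝ≥0∞) * m := by
                refine (ENNReal.mul_lt_mul_iff_right ?_ ENNReal.coe_ne_top).mpr hcon
                simpa using div_ne_zero hr0 hw0
        · rw [← hwz, ← ENNReal.coe_mul, div_mul_cancel₀ _ hw0]
      -- end obtain
    have hmemU : (0 : ℝ≥0∞) < 0 ∨ True := Or.inr trivial
    have hcz : (c • z) ∈ {y : D | (r : ℝ≥0∞) < ψ y} := by
      refine hPU (c • z) ?_
      intro p hp
      set q : {p // p ∈ P} := ⟨p, hp⟩ with hq
      rw [hB_smulr]
      refine lt_of_lt_of_le (show (p.2 : ℝ≥0∞) < (sp q : ℝ≥0∞) from ENNReal.coe_lt_coe.mpr (hsp1 q)) ?_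
      by_contra hle
      push_neg at hle
      have h2 : (c : ℝ≥0∞) * m ≤ ((r / sp q : ℝ≥0) : ℝ≥0∞) * ((c : ℝ≥0∞) * B p.1 z) := by
        calc (c : ℝ≥0∞) * m ≤ (c : ℝ≥0∞) * (((r / sp q : ℝ≥0) : ℝ≥0∞) * B p.1 z) :=
              mul_le_mul_right (hmle q) _
          _ = ((r / sp q : ℝ≥0) : ℝ≥0∞) * ((c : ℝ≥0∞) * B p.1 z) := by ring
      have h4 : ((r / sp q : ℝ≥0) : ℝ≥0∞) * ((c : ℝ≥0∞) * B p.1 z)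
          ≤ ((r / sp q : ℝ≥0) : ℝ≥0∞) * (sp q : ℝ≥0∞) :=
        mul_le_mul_right hle.le _
      have : (r : ℝ≥0∞) < (r : ℝ≥0∞) := hcm.trans_le ((h2.trans h4).trans_eq (hdm q))
      exact lt_irrefl _ this
    have : (r : ℝ≥0∞) < (c : ℝ≥0∞) * ψ z := by
      have := hcz
      rwa [Set.mem_setOf_eq, hψ_hom] at this
    exact absurd (this.trans_le hcψ) (lt_irrefl _)
  refine le_iSup₂_of_le F ⟨hFne, key⟩ ?_
  refine le_iInf₂ fun x hx => ?_
  obtain ⟨p, -, rfl⟩ := Finset.mem_image.1 hx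
  rw [hB_smull]
  calc (r : ℝ≥0∞) = ((r / sp p : ℝ≥0) : ℝ≥0∞) * (sp p : ℝ≥0∞) := (hdm p).symm
    _ ≤ ((r / sp p : ℝ≥0) : ℝ≥0∞) * B p.1.1 y := mul_le_mul_right (hsp2 p).le _
end

section
/- Main theorem: Let C, D be cones together with a non-singular bilinear map B : C → D → ℝ≥0∞, and equip D with the weak upper topology w(D,C). Then every sublinear functional ψ : D → ℝ≥0∞ that is lower semicontinuous for w(D,C) is the pointwise supremum of the evaluation functionals below it: for every y ∈ D, ψ(y) = ⨆ (x : C) (_ : ∀ z, B x z ≤ ψ(z)), B x y. -/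
open scoped ENNReal NNReal Topology

open Set in
-- small helpers
lemma sup_min_nat (a : ℝ≥0∞) : ⨆ M : ℕ, min a (M : ℝ≥0∞) = a := by
  refine le_antisymm (iSup_le fun M => min_le_left _ _) ?_
  rcases eq_top_or_lt_top a with h | h
  · subst h
    have : ⨆ M : ℕ, min (⊤ : ℝ≥0∞) (M : ℝ≥0∞) = ⨆ M : ℕ, (M : ℝ≥0∞) := by
      simp
    rw [this]
    simp [ENNReal.iSup_natCast]
  · obtain ⟨M, hM⟩ := ENNReal.exists_nat_gt h.ne
    exact le_iSup_of_le M (by simp [min_eq_left hM.le])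

theorem key_combination {D : Type*} [AddCommMonoid D] [Module ℝ≥0 D]
    (ψ : D → ℝ≥0∞)
    (hψ_hom : ∀ (r : ℝ≥0) (a : D), ψ (r • a) = (r : ℝ≥0∞) * ψ a)
    (hψ_subadd : ∀ a b : D, ψ (a + b) ≤ ψ a + ψ b)
    {n : ℕ} (f : Fin n → D → ℝ≥0∞)
    (hf_hom : ∀ (i) (t : ℝ≥0) (z), f i (t • z) = (t : ℝ≥0∞) * f i z)
    (hf_add : ∀ i z w, f i (z + w) = f i z + f i w)
    (y : D) (s s' : Fin n → ℝ≥0) (hss' : ∀ i, s i < s' i)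
    (hs'y : ∀ i, (s' i : ℝ≥0∞) ≤ f i y)
    (r c : ℝ≥0) (hcr : c < r)
    (H : ∀ z, (∀ i, (s i : ℝ≥0∞) < f i z) → (r : ℝ≥0∞) < ψ z) :
    ∃ μ : Fin n → ℝ≥0, (∀ z, ∑ i, (μ i : ℝ≥0∞) * f i z ≤ ψ z) ∧
      (c : ℝ≥0∞) ≤ ∑ i, (μ i : ℝ≥0∞) * f i y := by
  classical
  have hψ0 : ψ 0 = 0 := by simpa using hψ_hom 0 0
  have hf0 : ∀ i, f i 0 = 0 := fun i => by simpa using hf_hom i 0 0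
  by_cases hn : n = 0
  · subst hn
    exact absurd (H 0 fun i => i.elim0) (by simp [hψ0])
  haveI : Nonempty (Fin n) := ⟨⟨0, Nat.pos_of_ne_zero hn⟩⟩
  set S : Set ((Fin n → ℝ) × ℝ) :=
    {q | 0 ≤ q.2 ∧ ∃ z : D, (∀ i, ENNReal.ofReal (q.1 i) ≤ f i z) ∧
      ψ z ≤ ENNReal.ofReal q.2} with hSdef
  have hcoe : ∀ t : ℝ, ((t.toNNReal : ℝ≥0) : ℝ≥0∞) = ENNReal.ofReal t := fun t => rfl
  have h0S : (0 : (Fin n → ℝ) × ℝ) ∈ S :=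
    ⟨le_refl 0, 0, fun i => by simp [hf0], by simp [hψ0]⟩
  have hsmul : ∀ q ∈ S, ∀ t : ℝ, 0 ≤ t → t • q ∈ S := by
    rintro ⟨a, b⟩ ⟨hb, z, h1, h2⟩ t ht
    refine ⟨mul_nonneg ht hb, t.toNNReal • z, fun i => ?_, ?_⟩
    · show ENNReal.ofReal (t * a i) ≤ _
      rw [hf_hom, hcoe, ENNReal.ofReal_mul ht]
      exact mul_le_mul_right (h1 i) _
    · show _ ≤ ENNReal.ofReal (t * b)
      rw [hψ_hom, hcoe, ENNReal.ofReal_mul ht]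
      exact mul_le_mul_right h2 _
  have hconv : Convex ℝ S := by
    rintro ⟨a, b⟩ ⟨hb, z, h1, h2⟩ ⟨a', b'⟩ ⟨hb', z', h1', h2'⟩ θ θ' hθ hθ' hsum
    refine ⟨add_nonneg (mul_nonneg hθ hb) (mul_nonneg hθ' hb'), θ.toNNReal • z + θ'.toNNReal • z', fun i => ?_, ?_⟩
    · show ENNReal.ofReal (θ * a i + θ' * a' i) ≤ _
      rw [hf_add, hf_hom, hf_hom, hcoe, hcoe]
      refine le_trans ENNReal.ofReal_add_le (add_le_add ?_ ?_)
      · rw [ENNReal.ofReal_mul hθ]; exact mul_le_mul_right (h1 i) _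
      · rw [ENNReal.ofReal_mul hθ']; exact mul_le_mul_right (h1' i) _
    · show _ ≤ ENNReal.ofReal (θ * b + θ' * b')
      rw [ENNReal.ofReal_add (mul_nonneg hθ hb) (mul_nonneg hθ' hb'),
        ENNReal.ofReal_mul hθ, ENNReal.ofReal_mul hθ']
      calc ψ (θ.toNNReal • z + θ'.toNNReal • z')
          ≤ ψ (θ.toNNReal • z) + ψ (θ'.toNNReal • z') := hψ_subadd _ _
        _ = ENNReal.ofReal θ * ψ z + ENNReal.ofReal θ' * ψ z' := by
            rw [hψ_hom, hψ_hom, hcoe, hcoe]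
        _ ≤ _ := add_le_add (mul_le_mul_right h2 _) (mul_le_mul_right h2' _)
  set p : (Fin n → ℝ) × ℝ := (fun i => (s' i : ℝ), (c : ℝ)) with hpdef
  have hp : p ∉ closure S := by
    intro hp
    set ε : ℝ := min ((r : ℝ) - c) (Finset.univ.inf' Finset.univ_nonempty
      fun i => (s' i : ℝ) - s i) with hε
    have hεpos : 0 < ε := by
      refine lt_min (sub_pos.mpr (by exact_mod_cast hcr)) ?_
      rw [Finset.lt_inf'_iff]
      exact fun i _ => sub_pos.mpr (by exact_mod_cast hss' i)
    obtain ⟨q, hqS, hdist⟩ := Metric.mem_closure_iff.mp hp ε hεpos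
    rw [Prod.dist_eq, max_lt_iff] at hdist
    obtain ⟨hd1, hd2⟩ := hdist
    rw [dist_pi_lt_iff hεpos] at hd1
    obtain ⟨hb, z, h1, h2⟩ := hqS
    have hq1 : ∀ i, (s i : ℝ) < q.1 i := by
      intro i
      have := abs_lt.mp ((Real.dist_eq _ _ ▸ hd1 i))
      have hεi : ε ≤ (s' i : ℝ) - s i :=
        le_trans (min_le_right _ _) (Finset.inf'_le _ (Finset.mem_univ i))
      linarith [this.1, this.2]
    have hsz : ∀ i, (s i : ℝ≥0∞) < f i z := by
      intro i
      refine lt_of_lt_of_le ?_ (h1 i)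
      rw [← ENNReal.ofReal_coe_nnreal]
      exact ENNReal.ofReal_lt_ofReal_iff
        (lt_of_le_of_lt (s i).coe_nonneg (hq1 i)) |>.mpr (hq1 i)
    have hrψ := H z hsz
    have hq2 : q.2 < (r : ℝ) := by
      have := abs_lt.mp (Real.dist_eq _ _ ▸ hd2)
      have : q.2 < (c : ℝ) + ε := by linarith [this.1, this.2]
      have hεr : ε ≤ (r : ℝ) - c := min_le_left _ _
      linarith
    have : ψ z < (r : ℝ≥0∞) :=
      lt_of_le_of_lt h2 (by
        rw [← ENNReal.ofReal_coe_nnreal]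
        exact ENNReal.ofReal_lt_ofReal_iff
          (lt_of_le_of_lt c.coe_nonneg (by exact_mod_cast hcr)) |>.mpr hq2)
    exact absurd (hrψ.trans this) (lt_irrefl _)
  obtain ⟨F, u, hFlt, hup⟩ :=
    geometric_hahn_banach_closed_point hconv.closure isClosed_closure hp
  have hu0 : 0 < u := by
    have := hFlt 0 (subset_closure h0S)
    simpa using this
  have hFle : ∀ q ∈ S, F q ≤ 0 := by
    intro q hq
    by_contra h
    push_neg at h
    have ht : ∀ t : ℝ, 0 ≤ t → t * F q < u := by
      intro t ht
      have := hFlt (t • q) (subset_closure (hsmul q hq t ht))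
      simpa using this
    have h1 : 0 ≤ (u + 1) / F q := div_nonneg (by linarith) h.le
    have h2 := ht _ h1
    rw [div_mul_cancel₀ _ h.ne'] at h2
    linarith
  set lam : Fin n → ℝ := fun i => F (fun j => if i = j then (1 : ℝ) else 0, 0) with hlamdef
  set gam : ℝ := F (0, 1) with hgamdef
  have hdec : ∀ (a : Fin n → ℝ) (b : ℝ), F (a, b) = (∑ i, a i * lam i) + b * gam := by
    intro a b
    have h1 : (a, b) = ((a, 0) : (Fin n → ℝ) × ℝ) + b • (0, 1) := by
      ext <;> simp
    have h2 : F (a, 0) = ∑ i, a i * lam i := by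
      have := LinearMap.pi_apply_eq_sum_univ
        ((F : ((Fin n → ℝ) × ℝ) →ₗ[ℝ] ℝ).comp (LinearMap.inl ℝ (Fin n → ℝ) ℝ)) a
      simpa [mul_comm] using this
    rw [h1, map_add, map_smul, h2]
    simp [smul_eq_mul, mul_comm, hgamdef]
  have hlam_nonneg : ∀ i, 0 ≤ lam i := by
    intro i
    have hmemi : ((fun j => if i = j then (-1 : ℝ) else 0), (0 : ℝ)) ∈ S := by
      refine ⟨le_refl 0, 0, fun j => ?_, by simp [hψ0]⟩
      by_cases h : i = j <;> simp [h, hf0]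
    have := hFle _ hmemi
    rw [hdec] at this
    simp only [ite_mul, neg_mul, one_mul, zero_mul, Finset.sum_ite_eq,
      Finset.mem_univ, if_true, zero_mul, add_zero] at this
    linarith
  have hgam_nonpos : gam ≤ 0 := by
    have := hFle ((0 : Fin n → ℝ), (1 : ℝ)) ⟨zero_le_one, 0, by simp [hf0], by simp [hψ0]⟩
    rw [hdec] at this
    simpa using this
  have hFp : 0 < (∑ i, (s' i : ℝ) * lam i) + (c : ℝ) * gam := by
    have := hup
    rw [hpdef, hdec] at this
    linarith
  have hmain : ∀ z, ψ z ≠ ∞ → ∀ M : ℕ,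
      ∑ i, (min (f i z) (M : ℝ≥0∞)).toReal * lam i ≤ (ψ z).toReal * (-gam) := by
    intro z hz M
    have hmem : ((fun i => (min (f i z) (M : ℝ≥0∞)).toReal), (ψ z).toReal) ∈ S := by
      refine ⟨ENNReal.toReal_nonneg, z, fun i => ?_, ?_⟩
      · rw [ENNReal.ofReal_toReal (ne_top_of_le_ne_top (ENNReal.natCast_ne_top M)
          (min_le_right _ _))]
        exact min_le_left _ _
      · rw [ENNReal.ofReal_toReal hz]
    have := hFle _ hmem
    rw [hdec] at this
    linarith
  by_cases hg : gam = 0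
  · -- degenerate case: scale up
    have hsum_pos : 0 < ∑ i, (s' i : ℝ) * lam i := by
      rw [hg] at hFp; simpa using hFp
    set t : ℝ := ((c : ℝ) + 1) / (∑ i, (s' i : ℝ) * lam i) with htdef
    have htnn : 0 ≤ t := div_nonneg (by positivity) hsum_pos.le
    refine ⟨fun i => (t * lam i).toNNReal, ?_, ?_⟩
    · intro z
      rcases eq_top_or_lt_top (ψ z) with h | h
      · simp [h]
      have hz := h.ne
      have hzero : ∀ i, ((t * lam i).toNNReal : ℝ≥0∞) * f i z = 0 := by
        intro i
        rcases eq_or_lt_of_le (hlam_nonneg i) with hl | hl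
        · rw [← hl]; simp
        have h1 := hmain z hz 1
        rw [hg, neg_zero, mul_zero] at h1
        have hterm : (min (f i z) ((1:ℕ) : ℝ≥0∞)).toReal * lam i = 0 := by
          have hnn : ∀ j ∈ Finset.univ, 0 ≤ (min (f j z) ((1:ℕ) : ℝ≥0∞)).toReal * lam j :=
            fun j _ => mul_nonneg ENNReal.toReal_nonneg (hlam_nonneg j)
          have := (Finset.sum_eq_zero_iff_of_nonneg hnn).mp
            (le_antisymm h1 (Finset.sum_nonneg hnn)) i (Finset.mem_univ i)
          exact this
        have hmin0 : (min (f i z) ((1:ℕ) : ℝ≥0∞)).toReal = 0 := by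
          rcases mul_eq_zero.mp hterm with h' | h'
          · exact h'
          · exact absurd h' hl.ne'
        have : min (f i z) ((1:ℕ) : ℝ≥0∞) = 0 := by
          rcases (ENNReal.toReal_eq_zero_iff _).mp hmin0 with h' | h'
          · exact h'
          · exact absurd h' (ne_top_of_le_ne_top (ENNReal.natCast_ne_top 1) (min_le_right _ _))
        have hfz : f i z = 0 := by
          rcases min_eq_iff.mp this with ⟨h', _⟩ | ⟨h', _⟩
          · exact h'
          · simp at h'
        simp [hfz]
      calc ∑ i, ((t * lam i).toNNReal : ℝ≥0∞) * f i z = 0 := by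
            rw [Finset.sum_eq_zero fun i _ => hzero i]
        _ ≤ ψ z := zero_le
    · have hcsum : (c : ℝ) < ∑ i, t * lam i * (s' i : ℝ) := by
        have : ∑ i, t * lam i * (s' i : ℝ) = t * ∑ i, (s' i : ℝ) * lam i := by
          rw [Finset.mul_sum]; congr 1; ext i; ring
        rw [this, htdef, div_mul_cancel₀ _ hsum_pos.ne']
        linarith
      calc (c : ℝ≥0∞) = ENNReal.ofReal (c : ℝ) := by
            rw [ENNReal.ofReal_coe_nnreal]
        _ ≤ ENNReal.ofReal (∑ i, t * lam i * (s' i : ℝ)) :=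
            ENNReal.ofReal_le_ofReal hcsum.le
        _ = ∑ i, ENNReal.ofReal (t * lam i * (s' i : ℝ)) :=
            ENNReal.ofReal_sum_of_nonneg fun i _ =>
              mul_nonneg (mul_nonneg htnn (hlam_nonneg i)) (s' i).coe_nonneg
        _ ≤ ∑ i, ((t * lam i).toNNReal : ℝ≥0∞) * f i y := by
            refine Finset.sum_le_sum fun i _ => ?_
            rw [ENNReal.ofReal_mul (mul_nonneg htnn (hlam_nonneg i)), hcoe,
              ENNReal.ofReal_coe_nnreal]
            exact mul_le_mul_right (hs'y i) _
  · -- main case: gam < 0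
    have hgpos : 0 < -gam := by
      rcases lt_or_eq_of_le hgam_nonpos with h | h
      · linarith
      · exact absurd h hg
    set μ : Fin n → ℝ≥0 := fun i => (lam i / (-gam)).toNNReal with hμdef
    have hμnn : ∀ i, 0 ≤ lam i / (-gam) := fun i => div_nonneg (hlam_nonneg i) hgpos.le
    refine ⟨μ, ?_, ?_⟩
    · intro z
      rcases eq_top_or_lt_top (ψ z) with h | h
      · simp [h]
      have hz := h.ne
      have hM : ∀ M : ℕ, ∑ i, (μ i : ℝ≥0∞) * min (f i z) (M : ℝ≥0∞) ≤ ψ z := by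
        intro M
        have h1 := hmain z hz M
        have h2 : ∑ i, (lam i / (-gam)) * (min (f i z) (M : ℝ≥0∞)).toReal ≤ (ψ z).toReal := by
          have heq : ∑ i, (lam i / (-gam)) * (min (f i z) (M : ℝ≥0∞)).toReal
              = (∑ i, (min (f i z) (M : ℝ≥0∞)).toReal * lam i) / (-gam) := by
            rw [Finset.sum_div]
            exact Finset.sum_congr rfl fun i _ => by ring
          rw [heq, div_le_iff₀ hgpos]
          exact h1
        calc ∑ i, (μ i : ℝ≥0∞) * min (f i z) (M : ℝ≥0∞)
            = ∑ i, ENNReal.ofReal ((lam i / (-gam)) * (min (f i z) (M : ℝ≥0∞)).toReal) := by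
              refine Finset.sum_congr rfl fun i _ => ?_
              rw [ENNReal.ofReal_mul (hμnn i), ENNReal.ofReal_toReal
                (ne_top_of_le_ne_top (ENNReal.natCast_ne_top M) (min_le_right _ _)), ← hcoe]
          _ = ENNReal.ofReal (∑ i, (lam i / (-gam)) * (min (f i z) (M : ℝ≥0∞)).toReal) :=
              (ENNReal.ofReal_sum_of_nonneg fun i _ =>
                mul_nonneg (hμnn i) ENNReal.toReal_nonneg).symm
          _ ≤ ENNReal.ofReal (ψ z).toReal := ENNReal.ofReal_le_ofReal h2
          _ = ψ z := ENNReal.ofReal_toReal hz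
      have hsum : ∑ i, (μ i : ℝ≥0∞) * f i z
          = ⨆ M : ℕ, ∑ i, (μ i : ℝ≥0∞) * min (f i z) (M : ℝ≥0∞) := by
        rw [← ENNReal.finsetSum_iSup_of_monotone (fun i => ?_)]
        · refine Finset.sum_congr rfl fun i _ => ?_
          rw [← ENNReal.mul_iSup, sup_min_nat]
        · intro M M' hMM'
          exact mul_le_mul_right (min_le_min le_rfl (by exact_mod_cast Nat.cast_le.mpr hMM')) _
      rw [hsum]
      exact iSup_le hM
    · have hcs : (c : ℝ) < ∑ i, (lam i / (-gam)) * (s' i : ℝ) := by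
        have heq : ∑ i, (lam i / (-gam)) * (s' i : ℝ)
            = (∑ i, (s' i : ℝ) * lam i) / (-gam) := by
          rw [Finset.sum_div]
          exact Finset.sum_congr rfl fun i _ => by ring
        rw [heq, lt_div_iff₀ hgpos]
        nlinarith [hFp]
      calc (c : ℝ≥0∞) = ENNReal.ofReal (c : ℝ) := ENNReal.ofReal_coe_nnreal.symm
        _ ≤ ENNReal.ofReal (∑ i, (lam i / (-gam)) * (s' i : ℝ)) :=
            ENNReal.ofReal_le_ofReal hcs.le
        _ = ∑ i, ENNReal.ofReal ((lam i / (-gam)) * (s' i : ℝ)) :=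
            ENNReal.ofReal_sum_of_nonneg fun i _ => mul_nonneg (hμnn i) (s' i).coe_nonneg
        _ ≤ ∑ i, (μ i : ℝ≥0∞) * f i y := by
            refine Finset.sum_le_sum fun i _ => ?_
            rw [ENNReal.ofReal_mul (hμnn i), ENNReal.ofReal_coe_nnreal, ← hcoe]
            exact mul_le_mul_right (hs'y i) _


/-- Main theorem: for a dual pair of cones `C, D` with a non-singular bilinear
map `B : C → D → ℝ≥0∞`, every sublinear functional `ψ : D → ℝ≥0∞` which is
lower semicontinuous for the weak upper topology `w(D,C)` is the pointwise sup
of the evaluation functionals `B x` lying below it. -/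
theorem sublinear_lsc_eq_sup_evaluations
    {C D : Type*} [AddCommMonoid C] [Module ℝ≥0 C] [AddCommMonoid D] [Module ℝ≥0 D]
    (B : C → D → ℝ≥0∞)
    (hB_addl : ∀ x x' : C, ∀ y : D, B (x + x') y = B x y + B x' y)
    (hB_smull : ∀ (r : ℝ≥0) (x : C) (y : D), B (r • x) y = (r : ℝ≥0∞) * B x y)
    (hB_addr : ∀ (x : C) (y y' : D), B x (y + y') = B x y + B x y')
    (hB_smulr : ∀ (r : ℝ≥0) (x : C) (y : D), B x (r • y) = (r : ℝ≥0∞) * B x y)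
    (hB_nonsing : ∀ y y' : D, y ≠ y' → ∃ x : C, B x y ≠ B x y')
    (ψ : D → ℝ≥0∞)
    (hψ_hom : ∀ (r : ℝ≥0) (a : D), ψ (r • a) = (r : ℝ≥0∞) * ψ a)
    (hψ_subadd : ∀ a b : D, ψ (a + b) ≤ ψ a + ψ b)
    (hψ_lsc : ∀ r : ℝ≥0,
      IsOpen[TopologicalSpace.generateFrom
        {S | ∃ (x : C) (s : ℝ≥0), S = {y : D | (s : ℝ≥0∞) < B x y}}]
        {y : D | (r : ℝ≥0∞) < ψ y}) :
    ∀ y : D, ψ y = ⨆ (x : C) (_ : ∀ z : D, B x z ≤ ψ z), B x y := by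
    classical
  have hB0 : ∀ z : D, B 0 z = 0 := fun z => by simpa using hB_smull 0 0 z
  intro y
  refine le_antisymm ?_ (iSup₂_le fun x hx => hx y)
  refine ENNReal.le_of_forall_nnreal_lt fun r hr => ?_
  obtain ⟨r', hrr', hr'ψ⟩ := ENNReal.lt_iff_exists_nnreal_btwn.mp hr
  letI τ : TopologicalSpace D := TopologicalSpace.generateFrom
    {S | ∃ (x : C) (s : ℝ≥0), S = {y : D | (s : ℝ≥0∞) < B x y}}
  have hbasis := TopologicalSpace.isTopologicalBasis_of_subbasis
    (t := τ) (s := {S | ∃ (x : C) (s : ℝ≥0), S = {y : D | (s : ℝ≥0∞) < B x y}}) rfl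
  have hy : y ∈ {z : D | (r' : ℝ≥0∞) < ψ z} := hr'ψ
  obtain ⟨v, hvmem, hyv, hvU⟩ := hbasis.exists_subset_of_mem_open hy (hψ_lsc r')
  obtain ⟨Fam, ⟨hfin, hsub⟩, rfl⟩ := hvmem
  obtain ⟨n, e, he⟩ := hfin.fin_embedding
  have hchoice : ∀ i : Fin n, ∃ (x : C) (s : ℝ≥0),
      (e i : Set D) = {z | (s : ℝ≥0∞) < B x z} := by
    intro i
    exact hsub (he ▸ Set.mem_range_self i)
  choose x s hxs using hchoice
  have hy_i : ∀ i, (s i : ℝ≥0∞) < B (x i) y := by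
    intro i
    have hmem : y ∈ (e i : Set D) := hyv _ (he ▸ Set.mem_range_self i)
    rw [hxs i] at hmem
    exact hmem
  have hH : ∀ z, (∀ i, (s i : ℝ≥0∞) < B (x i) z) → (r' : ℝ≥0∞) < ψ z := by
    intro z hz
    refine hvU ?_
    intro T hT
    rw [← he] at hT
    obtain ⟨i, rfl⟩ := hT
    rw [hxs i]
    exact hz i
  have hbtwn : ∀ i, ∃ s'' : ℝ≥0, (s i : ℝ≥0∞) < s'' ∧ (s'' : ℝ≥0∞) < B (x i) y :=
    fun i => ENNReal.lt_iff_exists_nnreal_btwn.mp (hy_i i)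
  choose s' hs1 hs2 using hbtwn
  obtain ⟨μ, hμ1, hμ2⟩ := key_combination ψ hψ_hom hψ_subadd (fun i => B (x i))
    (fun i t z => hB_smulr t (x i) z) (fun i z w => hB_addr (x i) z w) y s s'
    (fun i => by exact_mod_cast hs1 i) (fun i => (hs2 i).le) r' r
    (by exact_mod_cast hrr') hH
  have hBsum : ∀ z : D, B (∑ i, μ i • x i) z = ∑ i, (μ i : ℝ≥0∞) * B (x i) z := by
    intro z
    have : ∀ t : Finset (Fin n),
        B (∑ i ∈ t, μ i • x i) z = ∑ i ∈ t, (μ i : ℝ≥0∞) * B (x i) z := by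
      intro t
      induction t using Finset.induction with
      | empty => simpa using hB0 z
      | @insert a s hnot ih =>
        rw [Finset.sum_insert hnot, hB_addl, hB_smull, ih, Finset.sum_insert hnot]
    exact this _
  have hadm : ∀ z, B (∑ i, μ i • x i) z ≤ ψ z := fun z => by rw [hBsum]; exact hμ1 z
  calc (r : ℝ≥0∞) ≤ B (∑ i, μ i • x i) y := by rw [hBsum]; exact hμ2
    _ ≤ ⨆ (x : C) (_ : ∀ z : D, B x z ≤ ψ z), B x y := le_iSup₂_of_le _ hadm le_rfl
end

section
/- Let C, D be cones, B : C → D → ℝ≥0∞ a bilinear map, and B₀ ⊆ C an arbitrary subset. Then the topology on D generated by the sets {y ∈ D | (r : ℝ≥0∞) < B x y} for x ∈ B₀ and r : ℝ≥0 coincides with the topology generated by the sets {y ∈ D | (r : ℝ≥0∞) < B x y} for x in the subcone of C generated by B₀ (the ℝ≥0-submodule spanned by B₀) and r : ℝ≥0. -/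
open scoped ENNReal NNReal

/-- The weak upper topology `w(D, B₀)` determined by a subset `B₀ ⊆ C` agrees
with the weak upper topology `w(D, Cone(B₀))` determined by the subcone of `C`
generated by `B₀`. -/
theorem weakUpperTopology_span
    {C D : Type*} [AddCommMonoid C] [Module ℝ≥0 C] [AddCommMonoid D] [Module ℝ≥0 D]
    (B : C → D → ℝ≥0∞)
    (hB_addl : ∀ x x' : C, ∀ y : D, B (x + x') y = B x y + B x' y)
    (hB_smull : ∀ (r : ℝ≥0) (x : C) (y : D), B (r • x) y = (r : ℝ≥0∞) * B x y)
    (hB_addr : ∀ (x : C) (y y' : D), B x (y + y') = B x y + B x y')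
    (hB_smulr : ∀ (r : ℝ≥0) (x : C) (y : D), B x (r • y) = (r : ℝ≥0∞) * B x y)
    (B₀ : Set C) :
    TopologicalSpace.generateFrom
        {S | ∃ x ∈ B₀, ∃ r : ℝ≥0, S = {y : D | (r : ℝ≥0∞) < B x y}}
      = TopologicalSpace.generateFrom
        {S | ∃ x ∈ Submodule.span ℝ≥0 B₀, ∃ r : ℝ≥0, S = {y : D | (r : ℝ≥0∞) < B x y}} := by
  letI tD : TopologicalSpace D := TopologicalSpace.generateFrom
    {S | ∃ x ∈ B₀, ∃ r : ℝ≥0, S = {y : D | (r : ℝ≥0∞) < B x y}}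
  apply le_antisymm
  · -- the hard direction: every generator from the span is open in the B₀-topology
    apply le_generateFrom
    rintro S ⟨x, hx, r, rfl⟩
    revert r
    induction hx using Submodule.span_induction with
    | mem x hx =>
      intro r
      exact TopologicalSpace.GenerateOpen.basic _ ⟨x, hx, r, rfl⟩
    | zero =>
      intro r
      have h0 : ∀ y : D, B 0 y = 0 := by
        intro y
        have := hB_smull 0 0 y
        simpa using this
      have : {y : D | (r : ℝ≥0∞) < B 0 y} = ∅ := by
        ext y; simp [h0 y]
      rw [this]; exact isOpen_empty
    | add x x' hx hx' ihx ihx' =>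
      intro r
      have hset : {y : D | (r : ℝ≥0∞) < B (x + x') y} =
          {y : D | (r : ℝ≥0∞) < B x y} ∪ {y : D | (r : ℝ≥0∞) < B x' y} ∪
            ⋃ (p : ℝ≥0) (q : ℝ≥0) (_ : (r : ℝ≥0∞) < (p : ℝ≥0∞) + q),
              ({y : D | (p : ℝ≥0∞) < B x y} ∩ {y : D | (q : ℝ≥0∞) < B x' y}) := by
        ext y
        simp only [Set.mem_setOf_eq, Set.mem_union, Set.mem_iUnion, Set.mem_inter_iff,
          hB_addl]
        constructor
        · intro h
          rcases eq_or_ne (B x y) 0 with h0 | h0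
          · exact Or.inl (Or.inr (by rwa [h0, zero_add] at h))
          rcases eq_or_ne (B x' y) 0 with h0' | h0'
          · exact Or.inl (Or.inl (by rwa [h0', add_zero] at h))
          obtain ⟨a, ha, b, hb, hab⟩ := ENNReal.exists_lt_add_of_lt_add h h0 h0'
          have haF : a ≠ ∞ := ne_top_of_lt ha
          have hbF : b ≠ ∞ := ne_top_of_lt hb
          exact Or.inr ⟨a.toNNReal, b.toNNReal,
            by rw [ENNReal.coe_toNNReal haF, ENNReal.coe_toNNReal hbF]; exact hab,
            by rw [ENNReal.coe_toNNReal haF]; exact ha,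
            by rw [ENNReal.coe_toNNReal hbF]; exact hb⟩
        · rintro ((h | h) | ⟨p, q, hpq, hp, hq⟩)
          · exact lt_of_lt_of_le h le_self_add
          · exact lt_of_lt_of_le h le_add_self
          · exact lt_of_lt_of_le hpq (add_le_add hp.le hq.le)
      rw [hset]
      refine IsOpen.union (IsOpen.union (ihx r) (ihx' r)) ?_
      exact isOpen_iUnion fun p => isOpen_iUnion fun q => isOpen_iUnion fun _ =>
        (ihx p).inter (ihx' q)
    | smul c x hx ihx =>
      intro r
      rcases eq_or_ne c 0 with rfl | hc
      · have : {y : D | (r : ℝ≥0∞) < B ((0 : ℝ≥0) • x) y} = ∅ := by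
          ext y
          rw [Set.mem_setOf_eq, hB_smull]
          simp
        rw [this]; exact isOpen_empty
      · have hset : {y : D | (r : ℝ≥0∞) < B (c • x) y} =
            {y : D | ((r / c : ℝ≥0) : ℝ≥0∞) < B x y} := by
          ext y
          simp only [Set.mem_setOf_eq, hB_smull]
          rw [ENNReal.coe_div hc, ENNReal.div_lt_iff (Or.inl (by exact_mod_cast hc))
            (Or.inl ENNReal.coe_ne_top), mul_comm]
        rw [hset]; exact ihx (r / c)
  · -- easy direction: B₀-generators are span-generators
    apply le_generateFrom
    rintro S ⟨x, hx, r, rfl⟩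
    exact TopologicalSpace.GenerateOpen.basic _
      ⟨x, Submodule.subset_span hx, r, rfl⟩
end

section
/- Let C, D be cones, where C additionally carries a partial order in which every nonempty directed subset has a least upper bound, and let B : C → D → ℝ≥0∞ be a bilinear map that is Scott-continuous in its first argument: whenever T ⊆ C is nonempty and directed and IsLUB T c, then B c y = ⨆ x ∈ T, B x y for every y ∈ D. Let C₀ ⊆ C be a d-dense subcone, i.e. C₀ is closed under addition and ℝ≥0-scalar multiplication, and the only subset S of C with C₀ ⊆ S that is closed under addition, under ℝ≥0-scalar multiplication, and under least upper bounds of its nonempty directed subsets is S = C itself. Then the weak upper topology w(D,C₀) (generated by {y | (r:ℝ≥0∞) < B x y}, x ∈ C₀, r : ℝ≥0) agrees with the weak upper topology w(D,C) (generated by the same sets for all x ∈ C). -/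
open scoped ENNReal NNReal

lemma lt_add_iff_ennreal' (r : ℝ≥0) (a b : ℝ≥0∞) :
    (r:ℝ≥0∞) < a + b ↔ (r:ℝ≥0∞) < a ∨ (r:ℝ≥0∞) < b ∨
      ∃ p q : ℝ≥0, p + q = r ∧ (p:ℝ≥0∞) < a ∧ (q:ℝ≥0∞) < b := by
  constructor
  · intro h
    by_cases h1 : (r:ℝ≥0∞) < a
    · exact Or.inl h1
    by_cases h2 : (r:ℝ≥0∞) < b
    · exact Or.inr (Or.inl h2)
    push_neg at h1 h2
    lift a to ℝ≥0 using (h1.trans_lt ENNReal.coe_lt_top).ne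
    lift b to ℝ≥0 using (h2.trans_lt ENNReal.coe_lt_top).ne
    right; right
    have h1' : a ≤ r := by exact_mod_cast h1
    have h2' : b ≤ r := by exact_mod_cast h2
    have h' : r < a + b := by exact_mod_cast h
    have hb : 0 < b := by
      rcases (zero_le : 0 ≤ b).lt_or_eq with hb | hb
      · exact hb
      · rw [← hb, add_zero] at h'; exact absurd h' h1'.not_gt
    have hr : 0 < r := by
      by_contra hc
      push_neg at hc
      have hr0 : r = 0 := le_antisymm hc (zero_le : 0 ≤ r)
      subst hr0
      rw [le_zero_iff] at h1' h2'
      simp [h1', h2'] at h'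
    have key : r - b < min a r :=
      lt_min ((tsub_lt_iff_right h2').mpr h') (tsub_lt_self hr hb)
    obtain ⟨p, hp1, hp2⟩ := exists_between key
    have hpr : p ≤ r := (hp2.trans_le (min_le_right _ _)).le
    refine ⟨p, r - p, add_tsub_cancel_of_le hpr, ?_, ?_⟩
    · exact_mod_cast hp2.trans_le (min_le_left _ _)
    · have hlt : r < b + p := by
        calc r = (r - b) + b := (tsub_add_cancel_of_le h2').symm
          _ < p + b := add_lt_add_left hp1 b
          _ = b + p := add_comm _ _
      exact_mod_cast (tsub_lt_iff_right hpr).mpr hlt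
  · rintro (h | h | ⟨p, q, hpq, hp, hq⟩)
    · exact h.trans_le le_self_add
    · exact h.trans_le le_add_self
    · calc (r:ℝ≥0∞) = (p:ℝ≥0∞) + q := by exact_mod_cast hpq.symm
        _ < a + b := ENNReal.add_lt_add hp hq

/-- For a dual pair of cones `C, D` where `C` is directed complete and the
bilinear map `B` is Scott-continuous in its first argument, the weak upper
topology `w(D, C₀)` determined by a d-dense subcone `C₀ ⊆ C` agrees with the
weak upper topology `w(D, C)`. -/
theorem weakUpperTopology_d_dense
    {C D : Type*} [AddCommMonoid C] [Module ℝ≥0 C] [PartialOrder C]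
    [AddCommMonoid D] [Module ℝ≥0 D]
    (hdcpo : ∀ T : Set C, T.Nonempty → DirectedOn (· ≤ ·) T → ∃ c : C, IsLUB T c)
    (B : C → D → ℝ≥0∞)
    (hB_addl : ∀ x x' : C, ∀ y : D, B (x + x') y = B x y + B x' y)
    (hB_smull : ∀ (r : ℝ≥0) (x : C) (y : D), B (r • x) y = (r : ℝ≥0∞) * B x y)
    (hB_addr : ∀ (x : C) (y y' : D), B x (y + y') = B x y + B x y')
    (hB_smulr : ∀ (r : ℝ≥0) (x : C) (y : D), B x (r • y) = (r : ℝ≥0∞) * B x y)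
    (hB_scott : ∀ (T : Set C) (c : C) (y : D), T.Nonempty → DirectedOn (· ≤ ·) T →
      IsLUB T c → B c y = ⨆ x ∈ T, B x y)
    (C₀ : Set C)
    (hC₀_add : ∀ x ∈ C₀, ∀ x' ∈ C₀, x + x' ∈ C₀)
    (hC₀_smul : ∀ (r : ℝ≥0), ∀ x ∈ C₀, r • x ∈ C₀)
    (hC₀_dense : ∀ S : Set C, C₀ ⊆ S →
      (∀ x ∈ S, ∀ x' ∈ S, x + x' ∈ S) →
      (∀ (r : ℝ≥0), ∀ x ∈ S, r • x ∈ S) →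
      (∀ T ⊆ S, T.Nonempty → DirectedOn (· ≤ ·) T → ∀ c : C, IsLUB T c → c ∈ S) →
      S = Set.univ) :
    TopologicalSpace.generateFrom
        {S | ∃ x ∈ C₀, ∃ r : ℝ≥0, S = {y : D | (r : ℝ≥0∞) < B x y}}
      = TopologicalSpace.generateFrom
        {S | ∃ (x : C) (r : ℝ≥0), S = {y : D | (r : ℝ≥0∞) < B x y}} := by
  set g₀ : Set (Set D) := {S | ∃ x ∈ C₀, ∃ r : ℝ≥0, S = {y : D | (r : ℝ≥0∞) < B x y}}
  set g₁ : Set (Set D) := {S | ∃ (x : C) (r : ℝ≥0), S = {y : D | (r : ℝ≥0∞) < B x y}}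
  letI τ₀ : TopologicalSpace D := TopologicalSpace.generateFrom g₀
  have hsub : g₀ ⊆ g₁ := by
    rintro s ⟨x, _, r, rfl⟩
    exact ⟨x, r, rfl⟩
  refine le_antisymm ?_ (TopologicalSpace.generateFrom_anti hsub)
  refine le_generateFrom ?_
  rintro s ⟨x, r, rfl⟩
  -- the set of x for which all such sets are open
  set S : Set C := {x : C | ∀ r : ℝ≥0, IsOpen {y : D | (r : ℝ≥0∞) < B x y}}
    with hS
  have hSuniv : S = Set.univ := by
    apply hC₀_dense
    · intro x hx r
      exact TopologicalSpace.isOpen_generateFrom_of_mem ⟨x, hx, r, rfl⟩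
    · intro x hx x' hx' r
      have : {y : D | (r : ℝ≥0∞) < B (x + x') y} =
          {y : D | (r : ℝ≥0∞) < B x y} ∪ {y : D | (r : ℝ≥0∞) < B x' y} ∪
          ⋃ p : ℝ≥0, ⋃ q : ℝ≥0, ⋃ (_ : p + q = r),
            ({y : D | (p : ℝ≥0∞) < B x y} ∩ {y : D | (q : ℝ≥0∞) < B x' y}) := by
        ext y
        simp only [hB_addl, Set.mem_setOf_eq, Set.mem_union, Set.mem_iUnion,
          Set.mem_inter_iff, lt_add_iff_ennreal' r (B x y) (B x' y)]
        tauto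
      rw [this]
      refine ((hx r).union (hx' r)).union ?_
      exact isOpen_iUnion fun p => isOpen_iUnion fun q => isOpen_iUnion fun _ =>
        (hx p).inter (hx' q)
    · intro c x hx r
      rcases eq_or_ne c 0 with rfl | hc
      · have : {y : D | (r : ℝ≥0∞) < B ((0:ℝ≥0) • x) y} = ∅ := by
          ext y
          simp only [Set.mem_setOf_eq, hB_smull, ENNReal.coe_zero, zero_mul,
            Set.mem_empty_iff_false, iff_false, not_lt]
          exact zero_le
        rw [this]; exact isOpen_empty
      · have : {y : D | (r : ℝ≥0∞) < B (c • x) y} =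
            {y : D | ((r / c : ℝ≥0) : ℝ≥0∞) < B x y} := by
          ext y
          simp only [hB_smull, Set.mem_setOf_eq, ENNReal.coe_div hc]
          rw [ENNReal.div_lt_iff (Or.inl (by exact_mod_cast hc))
            (Or.inl ENNReal.coe_ne_top), mul_comm]
        rw [this]; exact hx _
    · intro T hTS hTne hTdir c hc r
      have : {y : D | (r : ℝ≥0∞) < B c y} = ⋃ x ∈ T, {y : D | (r : ℝ≥0∞) < B x y} := by
        ext y
        simp only [Set.mem_setOf_eq, Set.mem_iUnion, hB_scott T c y hTne hTdir hc,
          lt_iSup_iff]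
      rw [this]
      exact isOpen_biUnion fun x hx => hTS hx r
  have hxS : x ∈ S := hSuniv ▸ Set.mem_univ x
  exact hxS r
end

section
/- Every lower semicontinuous linear functional on (ℝ≥0∞)^n is given by coefficients: if G : (Fin n → ℝ≥0∞) → ℝ≥0∞ is additive (G(x + y) = G(x) + G(y)), ℝ≥0-homogeneous (G(r • x) = (r : ℝ≥0∞) * G(x) for all r : ℝ≥0), and lower semicontinuous (with respect to the product topology on Fin n → ℝ≥0∞ coming from the usual topology of ℝ≥0∞), then there exist r : Fin n → ℝ≥0∞ such that G(x) = ∑ i, r i * x i for all x : Fin n → ℝ≥0∞. -/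
open scoped ENNReal NNReal

/-- Every lower semicontinuous linear functional `G` on `(ℝ≥0∞)^n` is given by
coefficients: `G x = ∑ i, r i * x i`. -/
theorem lsc_linear_functional_ennreal_pow (n : ℕ)
    (G : (Fin n → ℝ≥0∞) → ℝ≥0∞)
    (hadd : ∀ x y : Fin n → ℝ≥0∞, G (x + y) = G x + G y)
    (hhom : ∀ (r : ℝ≥0) (x : Fin n → ℝ≥0∞), G (r • x) = (r : ℝ≥0∞) * G x)
    (hlsc : LowerSemicontinuous G) :
    ∃ r : Fin n → ℝ≥0∞, ∀ x : Fin n → ℝ≥0∞, G x = ∑ i, r i * x i := by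
  have hG0 : G 0 = 0 := by
    have := hhom 0 0
    simpa using this
  set Ghom : (Fin n → ℝ≥0∞) →+ ℝ≥0∞ :=
    { toFun := G, map_zero' := hG0, map_add' := hadd } with hGhom
  refine ⟨fun i => G (Pi.single i 1), fun x => ?_⟩
  set r : Fin n → ℝ≥0∞ := fun i => G (Pi.single i 1) with hr
  -- finite case
  have hfin : ∀ y : Fin n → ℝ≥0, G (fun i => (y i : ℝ≥0∞)) = ∑ i, r i * (y i : ℝ≥0∞) := by
    intro y
    have hx : (fun i => (y i : ℝ≥0∞)) = ∑ i : Fin n, y i • Pi.single i (1 : ℝ≥0∞) := by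
      funext j
      simp [Finset.sum_apply, Pi.single_apply, Finset.sum_ite_eq', ENNReal.smul_def]
    rw [hx]
    have : G (∑ i : Fin n, y i • Pi.single i (1 : ℝ≥0∞))
        = Ghom (∑ i : Fin n, y i • Pi.single i (1 : ℝ≥0∞)) := rfl
    rw [this, map_sum]
    refine Finset.sum_congr rfl fun i _ => ?_
    have : Ghom (y i • Pi.single i (1 : ℝ≥0∞)) = G (y i • Pi.single i (1 : ℝ≥0∞)) := rfl
    rw [this, hhom]
    rw [hr]
    exact mul_comm _ _
  -- monotonicity of G
  have hmono : ∀ a b : Fin n → ℝ≥0∞, a ≤ b → G a ≤ G b := by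
    intro a b hab
    have hb : b = a + (b - a) := by
      funext i
      exact (add_tsub_cancel_of_le (hab i)).symm
    rw [hb, hadd]
    exact le_self_add
  -- truncations
  set xk : ℕ → (Fin n → ℝ≥0∞) := fun k i => min (x i) k with hxk
  have hxk_mono : ∀ i : Fin n, Monotone fun k : ℕ => xk k i := by
    intro i k l hkl
    exact min_le_min le_rfl (by exact_mod_cast Nat.cast_le.mpr hkl)
  have hsup : ∀ i, (⨆ k : ℕ, xk k i) = x i := by
    intro i
    have : (⨆ k : ℕ, xk k i) = x i ⊓ ⨆ k : ℕ, (k : ℝ≥0∞) := by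
      rw [inf_iSup_eq]
    rw [this, ENNReal.iSup_natCast, inf_top_eq]
  have htends : Filter.Tendsto xk Filter.atTop (nhds x) := by
    rw [tendsto_pi_nhds]
    intro i
    have := tendsto_atTop_iSup (hxk_mono i)
    rwa [hsup i] at this
  -- G x = ⨆ k, G (xk k)
  have hGsup : G x = ⨆ k : ℕ, G (xk k) := by
    refine le_antisymm ?_ (iSup_le fun k => hmono _ _ fun i => min_le_left _ _)
    refine le_of_forall_lt fun c hc => ?_
    have := (htends.eventually (hlsc x c hc)).exists
    obtain ⟨k, hk⟩ := this
    exact lt_of_lt_of_le hk (le_iSup (fun k => G (xk k)) k)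
  -- each truncation is finite-valued
  have hGxk : ∀ k : ℕ, G (xk k) = ∑ i, r i * xk k i := by
    intro k
    have hne : ∀ i, xk k i ≠ ∞ := fun i => (lt_of_le_of_lt (min_le_right _ _)
      (ENNReal.natCast_lt_top k)).ne
    have hx : xk k = fun i => (((xk k i).toNNReal : ℝ≥0) : ℝ≥0∞) := by
      funext i
      rw [ENNReal.coe_toNNReal (hne i)]
    rw [hx, hfin]
  rw [hGsup]
  calc (⨆ k : ℕ, G (xk k)) = ⨆ k : ℕ, ∑ i, r i * xk k i := by
        exact iSup_congr hGxk
    _ = ∑ i, ⨆ k : ℕ, r i * xk k i := by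
        rw [ENNReal.finsetSum_iSup_of_monotone]
        intro i k l hkl
        exact mul_le_mul_right (hxk_mono i hkl) _
    _ = ∑ i, r i * x i := by
        refine Finset.sum_congr rfl fun i _ => ?_
        rw [← ENNReal.mul_iSup, hsup i]
end

section
/- Let X be a topological space and let φ : 𝓥X → ℝ≥0∞ be linear (additive and ℝ≥0-homogeneous) and lower semicontinuous with respect to the weak*upper topology. Then φ is the pointwise supremum of the evaluation functionals below it: for every μ ∈ 𝓥X, φ(μ) = ⨆ (f : 𝓛X) (_ : ∀ ν ∈ 𝓥X, ν(f) ≤ φ(ν)), μ(f). In particular there is a family (f_i) in 𝓛X with φ(μ) = ⨆ᵢ μ(f_i) for all μ ∈ 𝓥X. -/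
open scoped ENNReal NNReal Topology

/-- `𝓛X`: the cone of lower semicontinuous functions `X → ℝ≥0∞`,
ordered pointwise. -/
abbrev LSCFun (X : Type*) [TopologicalSpace X] := {f : X → ℝ≥0∞ // LowerSemicontinuous f}

namespace LSCFun

variable {X : Type*} [TopologicalSpace X]

/-- Pointwise addition on `𝓛X`. -/
noncomputable instance : Add (LSCFun X) := ⟨fun f g => ⟨f.1 + g.1, f.2.add g.2⟩⟩

/-- Pointwise scalar multiplication by nonnegative reals on `𝓛X`. -/
noncomputable instance : SMul ℝ≥0 (LSCFun X) :=
  ⟨fun r f => ⟨fun x => (r : ℝ≥0∞) * f.1 x,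
    (ENNReal.continuous_const_mul (by simp)).comp_lowerSemicontinuous f.2
      fun _ _ hab => by first | exact mul_le_mul' le_rfl hab | (dsimp only; gcongr) | exact mul_le_mul_of_nonneg_left hab (zero_le _)⟩⟩

/-- The pointwise supremum of a set of lower semicontinuous functions,
again lower semicontinuous. -/
noncomputable def supOf (S : Set (LSCFun X)) : LSCFun X :=
  ⟨fun x => ⨆ f ∈ S, f.1 x, by
    simp only [iSup_subtype']
    exact lowerSemicontinuous_iSup fun f => f.1.2⟩

/-- Scott continuity of a functional `μ : 𝓛X → ℝ≥0∞`: `μ` preserves pointwise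
suprema of nonempty (pointwise-)directed families in `𝓛X`. -/
def ScottCont (μ : LSCFun X → ℝ≥0∞) : Prop :=
  ∀ S : Set (LSCFun X), S.Nonempty → DirectedOn (· ≤ ·) S →
    μ (supOf S) = ⨆ f ∈ S, μ f

end LSCFun

/-- `𝓥X`: the valuation powerdomain, consisting of the linear Scott-continuous
functionals `μ : 𝓛X → ℝ≥0∞`. -/
def ValuationPD (X : Type*) [TopologicalSpace X] : Set ((LSCFun X) → ℝ≥0∞) :=
  {μ | (∀ f g : LSCFun X, μ (f + g) = μ f + μ g) ∧
       (∀ (r : ℝ≥0) (f : LSCFun X), μ (r • f) = (r : ℝ≥0∞) * μ f) ∧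
       LSCFun.ScottCont μ}

/-- The weak*upper topology on `𝓥X`, generated by the subbasic open sets
`{μ | r < μ(f)}` for `f ∈ 𝓛X` and `r : ℝ≥0`. -/
def weakStarUpper (X : Type*) [TopologicalSpace X] : TopologicalSpace (ValuationPD X) :=
  TopologicalSpace.generateFrom
    {S | ∃ (f : LSCFun X) (r : ℝ≥0), S = {μ : ValuationPD X | (r : ℝ≥0∞) < μ.1 f}}

namespace SSaux

variable {X : Type*} [TopologicalSpace X]

lemma mem_vpd_zero : (fun _ : LSCFun X => (0:ℝ≥0∞)) ∈ ValuationPD X := by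
  refine ⟨fun f g => by simp, fun r f => by simp, fun S hS hdir => by simp⟩

lemma mem_vpd_smul (c : ℝ≥0) {ν : LSCFun X → ℝ≥0∞} (hν : ν ∈ ValuationPD X) :
    (fun f => (c:ℝ≥0∞) * ν f) ∈ ValuationPD X := by
  obtain ⟨hadd, hhom, hscott⟩ := hν
  refine ⟨fun f g => by show (c:ℝ≥0∞) * ν (f+g) = _; rw [hadd]; ring,
    fun r f => by show (c:ℝ≥0∞) * ν (r•f) = _; rw [hhom]; ring, fun S hS hdir => ?_⟩
  show (c:ℝ≥0∞) * ν (LSCFun.supOf S) = _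
  rw [hscott S hS hdir]
  simp only [iSup_subtype']
  exact ENNReal.mul_iSup _ _

lemma vpd_mono {ν : LSCFun X → ℝ≥0∞} (hν : ν ∈ ValuationPD X) {f g : LSCFun X}
    (h : f ≤ g) : ν f ≤ ν g := by
  obtain ⟨-, -, hscott⟩ := hν
  have hdir : DirectedOn (· ≤ ·) ({f, g} : Set (LSCFun X)) := by
    intro a ha b hb
    exact ⟨g, by simp, by rcases ha with rfl | rfl <;> simp [h, le_refl],
      by rcases hb with rfl | rfl <;> simp [h, le_refl]⟩
  have hsup : LSCFun.supOf ({f, g} : Set (LSCFun X)) = g := by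
    apply Subtype.ext
    funext x
    show (⨆ f' ∈ ({f, g} : Set (LSCFun X)), f'.1 x) = g.1 x
    refine le_antisymm (iSup₂_le fun h' hh' => ?_) (le_iSup₂_of_le g (by simp) le_rfl)
    rcases hh' with rfl | rfl
    · exact h x
    · exact le_rfl
  have := hscott ({f, g} : Set (LSCFun X)) ⟨f, by simp⟩ hdir
  rw [hsup] at this
  rw [this]
  exact le_iSup₂_of_le f (Set.mem_insert f {g}) le_rfl

lemma mem_vpd_add {ν ω : LSCFun X → ℝ≥0∞} (hν : ν ∈ ValuationPD X)
    (hω : ω ∈ ValuationPD X) : (fun f => ν f + ω f) ∈ ValuationPD X := by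
  refine ⟨fun f g => by show ν (f+g) + ω (f+g) = _; rw [hν.1, hω.1]; ring,
    fun r f => by show ν (r•f) + ω (r•f) = _; rw [hν.2.1, hω.2.1]; ring,
    fun S hS hdir => ?_⟩
  show ν (LSCFun.supOf S) + ω (LSCFun.supOf S) = _
  rw [hν.2.2 S hS hdir, hω.2.2 S hS hdir]
  simp only [iSup_subtype']
  haveI : Nonempty S := hS.to_subtype
  exact ENNReal.iSup_add_iSup fun i j => by
    obtain ⟨k, hk, hik, hjk⟩ := hdir i.1 i.2 j.1 j.2
    exact ⟨⟨k, hk⟩, add_le_add (vpd_mono hν hik) (vpd_mono hω hjk)⟩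


noncomputable def combo (lam : ℝ≥0) (a b : ℝ≥0∞) : ℝ≥0∞ :=
  ((1 - lam : ℝ≥0) : ℝ≥0∞) * a + (lam : ℝ≥0∞) * b

lemma combo_anti {a b : ℝ≥0∞} (hba : b ≤ a) {l1 l2 : ℝ≥0} (h12 : l1 ≤ l2) (h2 : l2 ≤ 1) :
    combo l2 a b ≤ combo l1 a b := by
  have h1 : (1 - l1 : ℝ≥0) = (1 - l2) + (l2 - l1) := (tsub_add_tsub_cancel h2 h12).symm
  have h2' : ((l2 - l1) + l1 : ℝ≥0) = l2 := tsub_add_cancel_of_le h12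
  have hsplit : (l2:ℝ≥0∞) * b = ((l2-l1:ℝ≥0):ℝ≥0∞) * b + (l1:ℝ≥0∞) * b := by
    rw [← add_mul, ← ENNReal.coe_add, h2']
  calc combo l2 a b = ((1-l2:ℝ≥0):ℝ≥0∞) * a + (((l2-l1:ℝ≥0):ℝ≥0∞) * b + (l1:ℝ≥0∞)*b) := by
        rw [combo, hsplit]
    _ ≤ ((1-l2:ℝ≥0):ℝ≥0∞) * a + (((l2-l1:ℝ≥0):ℝ≥0∞) * a + (l1:ℝ≥0∞)*b) := by
        gcongr
    _ = combo l1 a b := by rw [combo, h1, ENNReal.coe_add, add_mul]; ring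

lemma combo_mono {a b : ℝ≥0∞} (hab : a ≤ b) {l1 l2 : ℝ≥0} (h12 : l1 ≤ l2) (h2 : l2 ≤ 1) :
    combo l1 a b ≤ combo l2 a b := by
  have h1 : (1 - l1 : ℝ≥0) = (1 - l2) + (l2 - l1) := (tsub_add_tsub_cancel h2 h12).symm
  have h2' : ((l2 - l1) + l1 : ℝ≥0) = l2 := tsub_add_cancel_of_le h12
  calc combo l1 a b = ((1-l2:ℝ≥0):ℝ≥0∞) * a + (((l2-l1:ℝ≥0):ℝ≥0∞) * a + (l1:ℝ≥0∞)*b) := by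
        rw [combo, h1, ENNReal.coe_add, add_mul]; ring
    _ ≤ ((1-l2:ℝ≥0):ℝ≥0∞) * a + (((l2-l1:ℝ≥0):ℝ≥0∞) * b + (l1:ℝ≥0∞)*b) := by
        gcongr
    _ = combo l2 a b := by
        rw [combo, show (l2:ℝ≥0∞) * b = ((l2-l1:ℝ≥0):ℝ≥0∞) * b + (l1:ℝ≥0∞) * b by
          rw [← add_mul, ← ENNReal.coe_add, h2']]

lemma combo_le_of_le {a b c : ℝ≥0∞} (ha : a ≤ c) (hb : b ≤ c) {l : ℝ≥0} (hl : l ≤ 1) :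
    combo l a b ≤ c := by
  calc combo l a b ≤ ((1-l:ℝ≥0):ℝ≥0∞) * c + (l:ℝ≥0∞) * c := by rw [combo]; gcongr
    _ = (((1-l) + l : ℝ≥0) : ℝ≥0∞) * c := by push_cast; ring
    _ = c := by rw [tsub_add_cancel_of_le hl]; simp

/-- the "interval" of good coefficients -/
def Bs (a b c : ℝ≥0∞) : Set ℝ≥0 := {l | l ≤ 1 ∧ combo l a b ≤ c}

lemma Bs_bddAbove (a b c : ℝ≥0∞) : BddAbove (Bs a b c) := ⟨1, fun l hl => hl.1⟩

lemma sInf_mem_Bs {a b c : ℝ≥0∞} (h : (Bs a b c).Nonempty) : sInf (Bs a b c) ∈ Bs a b c := by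
  haveI : Nonempty (Bs a b c) := h.to_subtype
  set l0 := sInf (Bs a b c) with hl0
  obtain ⟨l1, hl1⟩ := id h
  have hinfle : ∀ l ∈ Bs a b c, l0 ≤ l := fun l hl => csInf_le (OrderBot.bddBelow _) hl
  have hle1 : l0 ≤ 1 := (hinfle l1 hl1).trans hl1.1
  refine ⟨hle1, ?_⟩
  -- key : ↑(1 - l0) ≤ ⨆ (l : Bs a b c), ↑(1 - l.1)
  have hbdd : BddAbove (Set.range fun l : Bs a b c => (1 - l.1 : ℝ≥0)) :=
    ⟨1, by rintro x ⟨l, rfl⟩; exact tsub_le_self⟩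
  set s : ℝ≥0 := ⨆ l : Bs a b c, (1 - l.1 : ℝ≥0) with hs
  have hkey : (1 - l0 : ℝ≥0) ≤ s := by
    rw [tsub_le_iff_tsub_le]
    refine le_csInf h fun l hl => ?_
    rw [← tsub_le_iff_tsub_le]
    exact le_ciSup hbdd ⟨l, hl⟩
  have hcoesup : ((s : ℝ≥0∞)) = ⨆ l : Bs a b c, ((1 - l.1 : ℝ≥0) : ℝ≥0∞) := by
    rw [hs, ENNReal.coe_iSup hbdd]
  calc combo l0 a b ≤ (s : ℝ≥0∞) * a + (l0 : ℝ≥0∞) * b := by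
        rw [combo]; exact add_le_add (mul_le_mul_left (ENNReal.coe_le_coe.2 hkey) a) le_rfl
    _ = (⨆ l : Bs a b c, ((1 - l.1 : ℝ≥0) : ℝ≥0∞) * a) + (l0:ℝ≥0∞) * b := by
        rw [hcoesup, ENNReal.iSup_mul]
    _ = ⨆ l : Bs a b c, (((1 - l.1 : ℝ≥0) : ℝ≥0∞) * a + (l0:ℝ≥0∞) * b) := by rw [ENNReal.iSup_add]
    _ ≤ c := by
        refine iSup_le fun l => ?_
        calc ((1 - l.1 : ℝ≥0) : ℝ≥0∞) * a + (l0:ℝ≥0∞) * b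
            ≤ ((1 - l.1 : ℝ≥0) : ℝ≥0∞) * a + (l.1:ℝ≥0∞) * b := by
              gcongr; exact hinfle l.1 l.2
          _ ≤ c := l.2.2

lemma sSup_mem_Bs {a b c : ℝ≥0∞} (h : (Bs a b c).Nonempty) : sSup (Bs a b c) ∈ Bs a b c := by
  haveI : Nonempty (Bs a b c) := h.to_subtype
  set x := sSup (Bs a b c) with hx
  have hlesup : ∀ l ∈ Bs a b c, l ≤ x := fun l hl => le_csSup (Bs_bddAbove a b c) hl
  have hle1 : x ≤ 1 := csSup_le h fun l hl => hl.1
  refine ⟨hle1, ?_⟩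
  have hbdd : BddAbove (Set.range fun l : Bs a b c => l.1) := ⟨1, by rintro y ⟨l, rfl⟩; exact l.2.1⟩
  have hxsup : x ≤ ⨆ l : Bs a b c, l.1 := csSup_le h fun l hl => le_ciSup hbdd ⟨l, hl⟩
  have hcoesup : ((x:ℝ≥0∞)) ≤ ⨆ l : Bs a b c, (l.1 : ℝ≥0∞) := by
    refine le_trans (ENNReal.coe_le_coe.2 hxsup) ?_
    rw [ENNReal.coe_iSup hbdd]
  calc combo x a b ≤ ((1-x:ℝ≥0):ℝ≥0∞) * a + (⨆ l : Bs a b c, (l.1:ℝ≥0∞)) * b := by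
        rw [combo]; gcongr
    _ = ⨆ l : Bs a b c, (((1-x:ℝ≥0):ℝ≥0∞) * a + (l.1:ℝ≥0∞) * b) := by
        rw [ENNReal.iSup_mul, ENNReal.add_iSup]
    _ ≤ c := by
        refine iSup_le fun l => ?_
        calc ((1-x:ℝ≥0):ℝ≥0∞) * a + (l.1:ℝ≥0∞) * b
            ≤ ((1-l.1:ℝ≥0):ℝ≥0∞) * a + (l.1:ℝ≥0∞) * b := by
              gcongr; exact hlesup l.1 l.2
          _ ≤ c := l.2.2

lemma one_mem_Bs {a b c : ℝ≥0∞} (hb : b ≤ c) : (1:ℝ≥0) ∈ Bs a b c := by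
  refine ⟨le_rfl, ?_⟩
  simp [combo, tsub_self, hb]

lemma zero_mem_Bs {a b c : ℝ≥0∞} (ha : a ≤ c) : (0:ℝ≥0) ∈ Bs a b c := by
  refine ⟨zero_le, ?_⟩
  simp [combo, ha]

variable {φ : ValuationPD X → ℝ≥0∞}

lemma pairwise_lemma
    (hφ_add : ∀ μ ν σ : ValuationPD X, σ.1 = μ.1 + ν.1 → φ σ = φ μ + φ ν)
    (hφ_hom : ∀ (r : ℝ≥0) (μ σ : ValuationPD X),
      σ.1 = (fun f => (r : ℝ≥0∞) * μ.1 f) → φ σ = (r : ℝ≥0∞) * φ μ)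
    {h₁ h₂ : LSCFun X} {tl : List (LSCFun X)}
    (H : ∀ ν : ValuationPD X, (∃ h ∈ tl, ν.1 h ≤ φ ν) ∨ ν.1 h₁ ≤ φ ν ∨ ν.1 h₂ ≤ φ ν)
    {ν' ν : ValuationPD X}
    (hD' : ∀ h ∈ tl, φ ν' < ν'.1 h) (hD : ∀ h ∈ tl, φ ν < ν.1 h)
    (hR : φ ν' < ν'.1 h₁) (hL : ν.1 h₁ ≤ φ ν) :
    sInf (Bs (ν'.1 h₁) (ν'.1 h₂) (φ ν')) ≤ sSup (Bs (ν.1 h₁) (ν.1 h₂) (φ ν)) := by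
  set a' := ν'.1 h₁ with ha'
  set b' := ν'.1 h₂ with hb'
  set c' := φ ν' with hc'
  set a := ν.1 h₁ with ha
  set b := ν.1 h₂ with hb
  set c := φ ν with hc
  have hb'c' : b' ≤ c' := by
    rcases H ν' with ⟨h, hh, hle⟩ | hle | hle
    · exact absurd hle (not_le.2 (hD' h hh))
    · exact absurd hle (not_le.2 hR)
    · exact hle
  have hc'top : c' ≠ ⊤ := hR.ne_top
  have hne' : (Bs a' b' c').Nonempty := ⟨1, one_mem_Bs hb'c'⟩
  have hne : (Bs a b c).Nonempty := ⟨0, zero_mem_Bs hL⟩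
  by_contra hcon
  push_neg at hcon
  set x := sSup (Bs a b c) with hxdef
  set l' := sInf (Bs a' b' c') with hl'def
  have hl'mem := sInf_mem_Bs hne'
  rw [← hl'def] at hl'mem
  have hctop : c ≠ ⊤ := by
    intro htop
    have h1m : (1:ℝ≥0) ∈ Bs a b c := ⟨le_rfl, by rw [htop]; exact le_top⟩
    have : (1:ℝ≥0) ≤ x := le_csSup (Bs_bddAbove a b c) h1m
    exact absurd (hcon.trans_le hl'mem.1) (not_lt.2 this)
  have hxmem := sSup_mem_Bs hne
  rw [← hxdef] at hxmem
  obtain ⟨lam, hxlam, hlaml'⟩ := exists_between hcon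
  have hlam1 : lam ≤ 1 := hlaml'.le.trans hl'mem.1
  have hlamlt1 : lam < 1 := hlaml'.trans_le hl'mem.1
  have hlam0 : 0 < lam := (zero_le : (0:ℝ≥0) ≤ x).trans_lt hxlam
  have h1lam0 : (1 - lam : ℝ≥0) ≠ 0 := by
    simpa [tsub_eq_zero_iff_le] using not_le.2 hlamlt1
  have hnmem : c < combo lam a b := by
    by_contra hle
    push_neg at hle
    exact absurd (le_csSup (Bs_bddAbove a b c) ⟨hlam1, hle⟩) (not_le.2 hxlam)
  have hnmem' : c' < combo lam a' b' := by
    by_contra hle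
    push_neg at hle
    have hmm : lam ∈ Bs a' b' c' := ⟨hlam1, hle⟩
    exact absurd (csInf_le (OrderBot.bddBelow _) hmm) (not_le.2 hlaml')
  have hcb : c < b := by
    by_contra hble
    push_neg at hble
    exact absurd (combo_le_of_le hL hble hlam1) (not_le.2 hnmem)
  have hafin : a ≠ ⊤ := ne_top_of_le_ne_top hctop hL
  have hb'fin : b' ≠ ⊤ := ne_top_of_le_ne_top hc'top hb'c'
  set p := c - a with hp
  set q := c' - b' with hq
  set α := a' - c' with hα
  set β := b - c with hβ
  have hap : a + p = c := add_tsub_cancel_of_le hL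
  have hbq : b' + q = c' := add_tsub_cancel_of_le hb'c'
  have hca : c' + α = a' := add_tsub_cancel_of_le hR.le
  have hcβ : c + β = b := add_tsub_cancel_of_le hcb.le
  have hptop : p ≠ ⊤ := ne_top_of_le_ne_top hctop tsub_le_self
  have hqtop : q ≠ ⊤ := ne_top_of_le_ne_top hc'top tsub_le_self
  have hα0 : α ≠ 0 := by rw [hα]; exact (tsub_pos_of_lt hR).ne'
  have hβ0 : β ≠ 0 := by rw [hβ]; exact (tsub_pos_of_lt hcb).ne'
  -- step 11
  have hPβ : ((1 - lam : ℝ≥0) : ℝ≥0∞) * p < (lam : ℝ≥0∞) * β := by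
    have hKfin : ((1 - lam : ℝ≥0) : ℝ≥0∞) * a + (lam : ℝ≥0∞) * c ≠ ⊤ :=
      ENNReal.add_ne_top.2 ⟨ENNReal.mul_ne_top ENNReal.coe_ne_top hafin,
        ENNReal.mul_ne_top ENNReal.coe_ne_top hctop⟩
    have hcsplit : c = (((1 - lam : ℝ≥0) : ℝ≥0∞) * a + (lam : ℝ≥0∞) * c)
        + ((1 - lam : ℝ≥0) : ℝ≥0∞) * p := by
      calc c = (((1-lam:ℝ≥0):ℝ≥0∞) + (lam:ℝ≥0∞)) * c := by
            rw [← ENNReal.coe_add, tsub_add_cancel_of_le hlam1]; simp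
        _ = ((1-lam:ℝ≥0):ℝ≥0∞) * (a + p) + (lam:ℝ≥0∞) * c := by rw [hap]; ring
        _ = _ := by rw [mul_add]; ring
    have hcombsplit : combo lam a b = (((1 - lam : ℝ≥0) : ℝ≥0∞) * a + (lam : ℝ≥0∞) * c)
        + (lam : ℝ≥0∞) * β := by
      rw [combo, ← hcβ, mul_add]; ring
    rw [hcsplit, hcombsplit] at hnmem
    exact (ENNReal.add_lt_add_iff_left hKfin).1 hnmem
  -- step 12
  have hQα : (lam : ℝ≥0∞) * q < ((1 - lam : ℝ≥0) : ℝ≥0∞) * α := by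
    have hKfin : ((1 - lam : ℝ≥0) : ℝ≥0∞) * c' + (lam : ℝ≥0∞) * b' ≠ ⊤ :=
      ENNReal.add_ne_top.2 ⟨ENNReal.mul_ne_top ENNReal.coe_ne_top hc'top,
        ENNReal.mul_ne_top ENNReal.coe_ne_top hb'fin⟩
    have hcsplit : c' = (((1 - lam : ℝ≥0) : ℝ≥0∞) * c' + (lam : ℝ≥0∞) * b')
        + (lam : ℝ≥0∞) * q := by
      calc c' = (((1-lam:ℝ≥0):ℝ≥0∞) + (lam:ℝ≥0∞)) * c' := by
            rw [← ENNReal.coe_add, tsub_add_cancel_of_le hlam1]; simp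
        _ = ((1-lam:ℝ≥0):ℝ≥0∞) * c' + (lam:ℝ≥0∞) * (b' + q) := by rw [hbq]; ring
        _ = _ := by rw [mul_add]; ring
    have hcombsplit : combo lam a' b' = (((1 - lam : ℝ≥0) : ℝ≥0∞) * c' + (lam : ℝ≥0∞) * b')
        + ((1 - lam : ℝ≥0) : ℝ≥0∞) * α := by
      rw [combo, ← hca, mul_add]; ring
    rw [hcsplit, hcombsplit] at hnmem'
    exact (ENNReal.add_lt_add_iff_left hKfin).1 hnmem'
  -- step 13 : p * q < α * β
  have hpq : p * q < α * β := by
    rcases eq_or_ne α ⊤ with hαtop | hαtop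
    · rw [hαtop, ENNReal.top_mul hβ0]
      exact (ENNReal.mul_ne_top hptop hqtop).lt_top
    rcases eq_or_ne β ⊤ with hβtop | hβtop
    · rw [hβtop, ENNReal.mul_top hα0]
      exact (ENNReal.mul_ne_top hptop hqtop).lt_top
    rcases eq_or_ne p 0 with hp0 | hp0
    · rw [hp0, zero_mul]
      exact ENNReal.mul_pos hα0 hβ0
    rcases eq_or_ne q 0 with hq0 | hq0
    · rw [hq0, mul_zero]
      exact ENNReal.mul_pos hα0 hβ0
    have hk0 : ((1 - lam : ℝ≥0) : ℝ≥0∞) * (lam : ℝ≥0∞) ≠ 0 :=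
      mul_ne_zero (ENNReal.coe_ne_zero.2 h1lam0) (ENNReal.coe_ne_zero.2 hlam0.ne')
    have hktop : ((1 - lam : ℝ≥0) : ℝ≥0∞) * (lam : ℝ≥0∞) ≠ ⊤ :=
      ENNReal.mul_ne_top ENNReal.coe_ne_top ENNReal.coe_ne_top
    have key : ((1 - lam : ℝ≥0) : ℝ≥0∞) * (lam : ℝ≥0∞) * (p * q)
        < ((1 - lam : ℝ≥0) : ℝ≥0∞) * (lam : ℝ≥0∞) * (α * β) := by
      calc ((1 - lam : ℝ≥0) : ℝ≥0∞) * (lam : ℝ≥0∞) * (p * q)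
          = (((1 - lam : ℝ≥0) : ℝ≥0∞) * p) * ((lam : ℝ≥0∞) * q) := by ring
        _ < ((lam : ℝ≥0∞) * β) * ((lam : ℝ≥0∞) * q) := by
            refine (ENNReal.mul_lt_mul_iff_left ?_ ?_).2 hPβ
            · exact mul_ne_zero (ENNReal.coe_ne_zero.2 hlam0.ne') hq0
            · exact ENNReal.mul_ne_top ENNReal.coe_ne_top hqtop
        _ < ((lam : ℝ≥0∞) * β) * (((1 - lam : ℝ≥0) : ℝ≥0∞) * α) := by
            refine (ENNReal.mul_lt_mul_iff_right ?_ ?_).2 hQα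
            · exact mul_ne_zero (ENNReal.coe_ne_zero.2 hlam0.ne') hβ0
            · exact ENNReal.mul_ne_top ENNReal.coe_ne_top hβtop
        _ = ((1 - lam : ℝ≥0) : ℝ≥0∞) * (lam : ℝ≥0∞) * (α * β) := by ring
    exact (ENNReal.mul_lt_mul_iff_right hk0 hktop).1 key
  -- step 14 : q / β < α / p
  have hdiv : q / β < α / p := by
    rcases eq_or_ne p 0 with hp0 | hp0
    · rw [hp0, ENNReal.div_zero hα0]
      exact ENNReal.div_lt_top hqtop hβ0
    rcases eq_or_ne α ⊤ with hαtop | hαtop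
    · rw [hαtop, ENNReal.top_div_of_ne_top hptop]
      exact ENNReal.div_lt_top hqtop hβ0
    rcases eq_or_ne β ⊤ with hβtop | hβtop
    · rw [hβtop, ENNReal.div_top]
      exact ENNReal.div_pos hα0 hptop
    rw [ENNReal.div_lt_iff (Or.inl hβ0) (Or.inl hβtop), ← ENNReal.mul_div_right_comm,
      ENNReal.lt_div_iff_mul_lt (Or.inl hp0) (Or.inl hptop), mul_comm q p]
    exact hpq
  -- step 15 : choose the coefficient t
  obtain ⟨ρ, hρ1, hρ2⟩ := exists_between hdiv
  have hρtop : ρ ≠ ⊤ := hρ2.ne_top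
  set t := ρ.toNNReal with ht
  have hcoet : (t : ℝ≥0∞) = ρ := ENNReal.coe_toNNReal hρtop
  have ht0 : t ≠ 0 := by
    intro h0
    rw [h0] at hcoet
    exact absurd (hcoet ▸ hρ1) (by simp)
  have htp : (t : ℝ≥0∞) * p < α := by
    rcases eq_or_ne p 0 with hp0 | hp0
    · simp only [hp0, mul_zero]
      exact pos_iff_ne_zero.2 hα0
    · rw [hcoet]
      exact (ENNReal.lt_div_iff_mul_lt (Or.inl hp0) (Or.inl hptop)).1 hρ2
  have hqt : q < (t : ℝ≥0∞) * β := by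
    rcases eq_or_ne β ⊤ with hβtop | hβtop
    · rw [hβtop, ENNReal.mul_top (by exact_mod_cast ht0)]
      exact hqtop.lt_top
    · rw [hcoet]
      exact (ENNReal.div_lt_iff (Or.inl hβ0) (Or.inl hβtop)).1 hρ1
  -- step 16 : the combined valuation
  set σ₁ : ValuationPD X := ⟨fun f => (t:ℝ≥0∞) * ν.1 f, mem_vpd_smul t ν.2⟩ with hσ₁
  set ω : ValuationPD X := ⟨fun f => ν'.1 f + (t:ℝ≥0∞) * ν.1 f,
    mem_vpd_add ν'.2 (mem_vpd_smul t ν.2)⟩ with hω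
  have hφσ₁ : φ σ₁ = (t:ℝ≥0∞) * φ ν := hφ_hom t ν σ₁ rfl
  have hφω : φ ω = c' + (t:ℝ≥0∞) * c := by
    rw [hφ_add ν' σ₁ ω rfl, hφσ₁, ← hc', ← hc]
  have htcfin : (t:ℝ≥0∞) * c ≠ ⊤ := ENNReal.mul_ne_top ENNReal.coe_ne_top hctop
  have htafin : (t:ℝ≥0∞) * a ≠ ⊤ := ENNReal.mul_ne_top ENNReal.coe_ne_top hafin
  rcases H ω with ⟨h, hh, hle⟩ | hle | hle
  · have : φ ω < ω.1 h := by
      rw [hφω]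
      exact ENNReal.add_lt_add (hD' h hh)
        ((ENNReal.mul_lt_mul_iff_right (by exact_mod_cast ht0) ENNReal.coe_ne_top).2 (hD h hh))
    exact absurd hle (not_le.2 this)
  · -- ω h₁  :  a' + t * a  >  c' + t * c
    have e1 : φ ω = (c' + (t:ℝ≥0∞) * a) + (t:ℝ≥0∞) * p := by
      rw [hφω, ← hap, mul_add]; ring
    have e2 : ω.1 h₁ = (c' + (t:ℝ≥0∞) * a) + α := by
      show a' + (t:ℝ≥0∞) * a = _
      rw [← hca]; ring
    have hKfin : c' + (t:ℝ≥0∞) * a ≠ ⊤ := ENNReal.add_ne_top.2 ⟨hc'top, htafin⟩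
    have : φ ω < ω.1 h₁ := by
      rw [e1, e2]
      exact ENNReal.add_lt_add_left hKfin htp
    exact absurd hle (not_le.2 this)
  · -- ω h₂  :  b' + t * b  >  c' + t * c
    have e1 : φ ω = (b' + (t:ℝ≥0∞) * c) + q := by
      rw [hφω, ← hbq]; ring
    have e2 : ω.1 h₂ = (b' + (t:ℝ≥0∞) * c) + (t:ℝ≥0∞) * β := by
      show b' + (t:ℝ≥0∞) * b = _
      rw [← hcβ, mul_add]; ring
    have hKfin : b' + (t:ℝ≥0∞) * c ≠ ⊤ := ENNReal.add_ne_top.2 ⟨hb'fin, htcfin⟩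
    have : φ ω < ω.1 h₂ := by
      rw [e1, e2]
      exact ENNReal.add_lt_add_left hKfin hqt
    exact absurd hle (not_le.2 this)

lemma vpd_combo (ν : ValuationPD X) (lam : ℝ≥0) (h₁ h₂ : LSCFun X) :
    ν.1 ((1 - lam) • h₁ + lam • h₂) = combo lam (ν.1 h₁) (ν.1 h₂) := by
  rw [ν.2.1, ν.2.2.1, ν.2.2.1, combo]

lemma key_combo
    (hφ_add : ∀ μ ν σ : ValuationPD X, σ.1 = μ.1 + ν.1 → φ σ = φ μ + φ ν)
    (hφ_hom : ∀ (r : ℝ≥0) (μ σ : ValuationPD X),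
      σ.1 = (fun f => (r : ℝ≥0∞) * μ.1 f) → φ σ = (r : ℝ≥0∞) * φ μ)
    {h₁ h₂ : LSCFun X} {tl : List (LSCFun X)}
    (H : ∀ ν : ValuationPD X, (∃ h ∈ tl, ν.1 h ≤ φ ν) ∨ ν.1 h₁ ≤ φ ν ∨ ν.1 h₂ ≤ φ ν) :
    ∃ lam : ℝ≥0, lam ≤ 1 ∧ ∀ ν : ValuationPD X,
      (∃ h ∈ tl, ν.1 h ≤ φ ν) ∨ ν.1 ((1 - lam) • h₁ + lam • h₂) ≤ φ ν := by
  classical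
  set T : Set ℝ≥0 := insert 0 {x | ∃ ν : ValuationPD X, (∀ h ∈ tl, φ ν < ν.1 h) ∧
    φ ν < ν.1 h₁ ∧ x = sInf (Bs (ν.1 h₁) (ν.1 h₂) (φ ν))} with hT
  have hTne : T.Nonempty := ⟨0, Set.mem_insert _ _⟩
  have hbc_of : ∀ ν : ValuationPD X, (∀ h ∈ tl, φ ν < ν.1 h) → φ ν < ν.1 h₁ →
      ν.1 h₂ ≤ φ ν := by
    intro ν hDν hRν
    rcases H ν with ⟨h, hh, hle⟩ | hle | hle
    · exact absurd hle (not_le.2 (hDν h hh))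
    · exact absurd hle (not_le.2 hRν)
    · exact hle
  have hTbdd : ∀ y ∈ T, y ≤ 1 := by
    intro y hy
    rcases Set.mem_insert_iff.1 hy with rfl | ⟨ν, hDν, hRν, rfl⟩
    · exact zero_le
    · exact csInf_le (OrderBot.bddBelow _) (one_mem_Bs (hbc_of ν hDν hRν))
  have hTbdd' : BddAbove T := ⟨1, fun y hy => hTbdd y hy⟩
  set lam := sSup T with hlam
  have hlam1 : lam ≤ 1 := csSup_le hTne hTbdd
  refine ⟨lam, hlam1, fun ν => ?_⟩
  by_cases hDν : ∃ h ∈ tl, ν.1 h ≤ φ ν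
  · exact Or.inl hDν
  push_neg at hDν
  right
  rw [vpd_combo]
  by_cases hRν : φ ν < ν.1 h₁
  · have hbc := hbc_of ν hDν hRν
    have hmem := sInf_mem_Bs (⟨1, one_mem_Bs hbc⟩ : (Bs (ν.1 h₁) (ν.1 h₂) (φ ν)).Nonempty)
    have hin : sInf (Bs (ν.1 h₁) (ν.1 h₂) (φ ν)) ≤ lam :=
      le_csSup hTbdd' (Set.mem_insert_iff.2 (Or.inr ⟨ν, hDν, hRν, rfl⟩))
    exact le_trans (combo_anti (hbc.trans hRν.le) hin hlam1) hmem.2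
  · push_neg at hRν
    by_cases hb : ν.1 h₂ ≤ φ ν
    · exact combo_le_of_le hRν hb hlam1
    push_neg at hb
    have hne : (Bs (ν.1 h₁) (ν.1 h₂) (φ ν)).Nonempty := ⟨0, zero_mem_Bs hRν⟩
    have hxmem := sSup_mem_Bs hne
    have hlamx : lam ≤ sSup (Bs (ν.1 h₁) (ν.1 h₂) (φ ν)) := by
      refine csSup_le hTne ?_
      intro y hy
      rcases Set.mem_insert_iff.1 hy with rfl | ⟨ν'', hD'', hR'', rfl⟩
      · exact zero_le
      · exact pairwise_lemma hφ_add hφ_hom H hD'' hDν hR'' hRν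
    exact le_trans (combo_mono (hRν.trans hb.le) hlamx hxmem.1) hxmem.2

lemma helly_list
    (hφ_add : ∀ μ ν σ : ValuationPD X, σ.1 = μ.1 + ν.1 → φ σ = φ μ + φ ν)
    (hφ_hom : ∀ (r : ℝ≥0) (μ σ : ValuationPD X),
      σ.1 = (fun f => (r : ℝ≥0∞) * μ.1 f) → φ σ = (r : ℝ≥0∞) * φ μ)
    (μ : ValuationPD X) (r : ℝ≥0) :
    ∀ (n : ℕ) (l : List (LSCFun X)), l.length ≤ n →
      (∀ h ∈ l, (r:ℝ≥0∞) ≤ μ.1 h) →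
      (∀ ν : ValuationPD X, ∃ h ∈ l, ν.1 h ≤ φ ν) →
      ∃ f : LSCFun X, (∀ ν : ValuationPD X, ν.1 f ≤ φ ν) ∧ (r:ℝ≥0∞) ≤ μ.1 f := by
  intro n
  induction n with
  | zero =>
    intro l hlen hμl hall
    have : l = [] := List.eq_nil_of_length_eq_zero (Nat.le_zero.1 hlen)
    subst this
    obtain ⟨h, hh, -⟩ := hall μ
    exact absurd hh List.not_mem_nil
  | succ n ih =>
    intro l hlen hμl hall
    match l with
    | [] =>
      obtain ⟨h, hh, -⟩ := hall μ
      exact absurd hh List.not_mem_nil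
    | [h₁] =>
      refine ⟨h₁, fun ν => ?_, hμl h₁ (by simp)⟩
      obtain ⟨h, hh, hle⟩ := hall ν
      rw [List.mem_singleton] at hh
      subst hh
      exact hle
    | h₁ :: h₂ :: tl =>
      have H : ∀ ν : ValuationPD X, (∃ h ∈ tl, ν.1 h ≤ φ ν) ∨ ν.1 h₁ ≤ φ ν ∨ ν.1 h₂ ≤ φ ν := by
        intro ν
        obtain ⟨h, hh, hle⟩ := hall ν
        simp only [List.mem_cons] at hh
        rcases hh with rfl | rfl | hh
        · exact Or.inr (Or.inl hle)
        · exact Or.inr (Or.inr hle)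
        · exact Or.inl ⟨h, hh, hle⟩
      obtain ⟨lam, hlam1, hcomb⟩ := key_combo hφ_add hφ_hom H
      have hcr : combo lam ((r:ℝ≥0)) ((r:ℝ≥0)) = (r:ℝ≥0∞) := by
        rw [combo, ← add_mul, ← ENNReal.coe_add, tsub_add_cancel_of_le hlam1]
        simp
      refine ih (((1 - lam) • h₁ + lam • h₂) :: tl) ?_ ?_ ?_
      · simp only [List.length_cons] at hlen ⊢
        omega
      · intro h hh
        rcases List.mem_cons.1 hh with rfl | hh
        · rw [vpd_combo, ← hcr]
          rw [combo, combo]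
          gcongr
          · exact hμl h₁ (by simp)
          · exact hμl h₂ (by simp)
        · exact hμl h (by simp [hh])
      · intro ν
        rcases hcomb ν with ⟨h, hh, hle⟩ | hle
        · exact ⟨h, by simp [hh], hle⟩
        · exact ⟨(1 - lam) • h₁ + lam • h₂, by simp, hle⟩

lemma subbasic_list (μ : ValuationPD X) {r : ℝ≥0} (hr : (r:ℝ≥0∞) < φ μ)
    (hop : IsOpen[weakStarUpper X] {ν : ValuationPD X | (r:ℝ≥0∞) < φ ν}) :
    ∃ l : List (LSCFun X), (∀ g ∈ l, 1 < μ.1 g) ∧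
      ∀ ν : ValuationPD X, (∀ g ∈ l, 1 < ν.1 g) → (r:ℝ≥0∞) < φ ν := by
  classical
  letI := weakStarUpper X
  set SB : Set (Set (ValuationPD X)) :=
    {S | ∃ (f : LSCFun X) (s : ℝ≥0), S = {ν : ValuationPD X | (s : ℝ≥0∞) < ν.1 f}} with hSB
  have hb : TopologicalSpace.IsTopologicalBasis
      ((fun f : Set (Set (ValuationPD X)) => ⋂₀ f) ''
        {f : Set (Set (ValuationPD X)) | f.Finite ∧ f ⊆ SB}) :=
    TopologicalSpace.isTopologicalBasis_of_subbasis rfl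
  obtain ⟨V, ⟨T, ⟨hTfin, hTsub⟩, rfl⟩, hμV, hVsub⟩ :=
    hb.exists_subset_of_mem_open (show μ ∈ {ν : ValuationPD X | (r:ℝ≥0∞) < φ ν} from hr) hop
  have main : ∀ T' : Set (Set (ValuationPD X)), T'.Finite → T' ⊆ SB → μ ∈ ⋂₀ T' →
      ∃ l : List (LSCFun X), (∀ g ∈ l, 1 < μ.1 g) ∧
        ∀ ν : ValuationPD X, (∀ g ∈ l, 1 < ν.1 g) → ν ∈ ⋂₀ T' := by
    intro T' hT'fin
    refine Set.Finite.induction_on T' hT'fin ?_ ?_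
    · intro _ _
      exact ⟨[], by simp, fun ν _ => by simp⟩
    · intro S T'' hST hT''fin IH hsub hμmem
      have hμall := Set.mem_sInter.1 hμmem
      obtain ⟨l, hl1, hl2⟩ := IH (fun W hW => hsub (Set.mem_insert_of_mem _ hW))
        (Set.mem_sInter.2 fun W hW => hμall W (Set.mem_insert_of_mem _ hW))
      obtain ⟨f, sr, rfl⟩ := hsub (Set.mem_insert S T'')
      have hsf : (sr : ℝ≥0∞) < μ.1 f := hμall _ (Set.mem_insert _ _)
      obtain ⟨t', ht1, ht2⟩ := exists_between hsf
      have ht'top : t' ≠ ⊤ := ht2.ne_top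
      set t := t'.toNNReal with ht
      have hcoet : (t : ℝ≥0∞) = t' := ENNReal.coe_toNNReal ht'top
      have hst : sr < t := by
        rw [← ENNReal.coe_lt_coe, hcoet]; exact ht1
      have ht0 : t ≠ 0 := by
        intro h0
        rw [h0] at hst
        exact absurd hst (by simp)
      have hti0 : ((t⁻¹ : ℝ≥0) : ℝ≥0∞) ≠ 0 := ENNReal.coe_ne_zero.2 (inv_ne_zero ht0)
      have hinvt : ((t⁻¹ : ℝ≥0) : ℝ≥0∞) * (t : ℝ≥0∞) = 1 := by
        rw [← ENNReal.coe_mul, inv_mul_cancel₀ ht0, ENNReal.coe_one]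
      refine ⟨(t⁻¹ • f) :: l, ?_, ?_⟩
      · intro g hg
        rcases List.mem_cons.1 hg with rfl | hg
        · rw [μ.2.2.1, ← hinvt]
          exact (ENNReal.mul_lt_mul_iff_right hti0 ENNReal.coe_ne_top).2 (hcoet ▸ ht2)
        · exact hl1 g hg
      · intro ν hν
        refine Set.mem_sInter.2 fun W hW => ?_
        rcases Set.mem_insert_iff.1 hW with rfl | hW
        · have h1 : (1:ℝ≥0∞) < ν.1 (t⁻¹ • f) := hν _ (by simp)
          rw [ν.2.2.1] at h1
          have : (t : ℝ≥0∞) * 1 < (t : ℝ≥0∞) * (((t⁻¹:ℝ≥0) : ℝ≥0∞) * ν.1 f) :=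
            (ENNReal.mul_lt_mul_iff_right (ENNReal.coe_ne_zero.2 ht0) ENNReal.coe_ne_top).2 h1
          rw [mul_one, ← mul_assoc, ← ENNReal.coe_mul, mul_inv_cancel₀ ht0,
            ENNReal.coe_one, one_mul] at this
          exact (ENNReal.coe_lt_coe.2 hst).trans this
        · exact Set.mem_sInter.1 (hl2 ν fun g hg => hν g (by simp [hg])) W hW
  obtain ⟨l, hl1, hl2⟩ := main T hTfin hTsub hμV
  exact ⟨l, hl1, fun ν hν => hVsub (hl2 ν hν)⟩

lemma scale_min
    (hφ_hom : ∀ (r : ℝ≥0) (μ σ : ValuationPD X),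
      σ.1 = (fun f => (r : ℝ≥0∞) * μ.1 f) → φ σ = (r : ℝ≥0∞) * φ μ)
    {r : ℝ≥0} (hr0 : r ≠ 0) {l : List (LSCFun X)} (hlne : l ≠ [])
    (himp : ∀ ν : ValuationPD X, (∀ g ∈ l, 1 < ν.1 g) → (r:ℝ≥0∞) < φ ν) :
    ∀ ν : ValuationPD X, ∃ g ∈ l, (r:ℝ≥0∞) * ν.1 g ≤ φ ν := by
  intro ν
  by_contra hcon
  push_neg at hcon
  have hφfin : φ ν ≠ ⊤ := by
    obtain ⟨g₀, hg₀⟩ := List.exists_mem_of_ne_nil l hlne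
    exact (hcon g₀ hg₀).ne_top
  set d : ℝ≥0∞ := φ ν / r with hd
  have hdfin : d ≠ ⊤ := by
    rw [hd]
    exact (ENNReal.div_lt_top hφfin (by exact_mod_cast hr0)).ne
  have hdlt : ∀ g ∈ l, d < ν.1 g := by
    intro g hg
    rw [hd, ENNReal.div_lt_iff (Or.inl (by exact_mod_cast hr0)) (Or.inl ENNReal.coe_ne_top)]
    rw [mul_comm]
    exact hcon g hg
  -- min of the list
  have hmin : ∀ L : List (LSCFun X), (∀ g ∈ L, d < ν.1 g) →
      ∃ m : ℝ≥0∞, d < m ∧ ∀ g ∈ L, m ≤ ν.1 g := by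
    intro L
    induction L with
    | nil => exact fun _ => ⟨⊤, hdfin.lt_top, by simp⟩
    | cons g L ihL =>
      intro hL
      obtain ⟨m, hm1, hm2⟩ := ihL fun g' hg' => hL g' (by simp [hg'])
      exact ⟨min m (ν.1 g), lt_min hm1 (hL g (by simp)),
        fun g' hg' => by
          rcases List.mem_cons.1 hg' with rfl | hg'
          · exact min_le_right _ _
          · exact (min_le_left _ _).trans (hm2 g' hg')⟩
  obtain ⟨m, hdm, hmle⟩ := hmin l hdlt
  obtain ⟨c', hc1, hc2⟩ := exists_between hdm
  have hc'top : c' ≠ ⊤ := hc2.ne_top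
  set c := c'.toNNReal with hc
  have hcoec : (c : ℝ≥0∞) = c' := ENNReal.coe_toNNReal hc'top
  have hc0 : c ≠ 0 := by
    intro h0
    rw [← hcoec, h0] at hc1
    exact absurd hc1 (by simp)
  have hinv : ((c⁻¹ : ℝ≥0) : ℝ≥0∞) * (c : ℝ≥0∞) = 1 := by
    rw [← ENNReal.coe_mul, inv_mul_cancel₀ hc0, ENNReal.coe_one]
  set νc : ValuationPD X := ⟨fun f => ((c⁻¹ : ℝ≥0) : ℝ≥0∞) * ν.1 f, mem_vpd_smul c⁻¹ ν.2⟩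
    with hνc
  have hνcg : ∀ g ∈ l, 1 < νc.1 g := by
    intro g hg
    show (1:ℝ≥0∞) < ((c⁻¹ : ℝ≥0) : ℝ≥0∞) * ν.1 g
    rw [← hinv]
    refine (ENNReal.mul_lt_mul_iff_right (ENNReal.coe_ne_zero.2 (inv_ne_zero hc0))
      ENNReal.coe_ne_top).2 ?_
    exact lt_of_lt_of_le (hcoec ▸ hc2) (hmle g hg)
  have hrφ : (r:ℝ≥0∞) < φ νc := himp νc hνcg
  have hφνc : φ νc = ((c⁻¹ : ℝ≥0) : ℝ≥0∞) * φ ν := hφ_hom c⁻¹ ν νc rfl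
  rw [hφνc] at hrφ
  have h1 : (r:ℝ≥0∞) * (c : ℝ≥0∞) < φ ν := by
    have hrw : ((c⁻¹ : ℝ≥0) : ℝ≥0∞) * φ ν = φ ν / (c : ℝ≥0∞) := by
      rw [ENNReal.div_eq_inv_mul, ENNReal.coe_inv hc0]
    rw [hrw] at hrφ
    exact (ENNReal.lt_div_iff_mul_lt (Or.inl (ENNReal.coe_ne_zero.2 hc0))
      (Or.inl ENNReal.coe_ne_top)).1 hrφ
  have h2 : φ ν < (c : ℝ≥0∞) * (r:ℝ≥0∞) := by
    have hlt : d < (c : ℝ≥0∞) := hcoec ▸ hc1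
    rw [hd, ENNReal.div_lt_iff (Or.inl (by exact_mod_cast hr0))
      (Or.inl ENNReal.coe_ne_top)] at hlt
    exact hlt
  rw [mul_comm] at h1
  exact absurd h1 (not_lt.2 h2.le)

lemma main_exists
    (hφ_add : ∀ μ ν σ : ValuationPD X, σ.1 = μ.1 + ν.1 → φ σ = φ μ + φ ν)
    (hφ_hom : ∀ (r : ℝ≥0) (μ σ : ValuationPD X),
      σ.1 = (fun f => (r : ℝ≥0∞) * μ.1 f) → φ σ = (r : ℝ≥0∞) * φ μ)
    (hφ_lsc : ∀ r : ℝ≥0, IsOpen[weakStarUpper X] {μ : ValuationPD X | (r : ℝ≥0∞) < φ μ})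
    (μ : ValuationPD X) {r : ℝ≥0} (hr0 : r ≠ 0) (hr : (r:ℝ≥0∞) < φ μ) :
    ∃ f : LSCFun X, (∀ ν : ValuationPD X, ν.1 f ≤ φ ν) ∧ (r:ℝ≥0∞) ≤ μ.1 f := by
  obtain ⟨l, hl1, hl2⟩ := subbasic_list μ hr (hφ_lsc r)
  rcases eq_or_ne l [] with rfl | hlne
  · -- then φ of the zero valuation exceeds r : contradiction
    exfalso
    set ν₀ : ValuationPD X := ⟨fun _ => 0, mem_vpd_zero⟩ with hν₀
    have h0 : φ ν₀ = 0 := by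
      have := hφ_hom 0 ν₀ ν₀ (by funext f; simp [hν₀])
      simpa using this
    have := hl2 ν₀ (by simp)
    rw [h0] at this
    exact absurd this (by simp)
  · have hsc := scale_min hφ_hom hr0 hlne hl2
    have hmap : ∀ ν : ValuationPD X, ∃ h ∈ l.map (fun g => r • g), ν.1 h ≤ φ ν := by
      intro ν
      obtain ⟨g, hg, hle⟩ := hsc ν
      refine ⟨r • g, List.mem_map.2 ⟨g, hg, rfl⟩, ?_⟩
      rw [ν.2.2.1]
      exact hle
    have hmapμ : ∀ h ∈ l.map (fun g => r • g), (r:ℝ≥0∞) ≤ μ.1 h := by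
      intro h hh
      obtain ⟨g, hg, rfl⟩ := List.mem_map.1 hh
      rw [μ.2.2.1]
      calc (r:ℝ≥0∞) = (r:ℝ≥0∞) * 1 := (mul_one _).symm
        _ ≤ (r:ℝ≥0∞) * μ.1 g := mul_le_mul_right (hl1 g hg).le _
    exact helly_list hφ_add hφ_hom μ r (l.map (fun g => r • g)).length _ le_rfl hmapμ hmap

end SSaux

/-- Every linear functional on `𝓥X` that is lower semicontinuous for the
weak*upper topology is the pointwise supremum of the evaluation functionals
below it; in particular it is the pointwise supremum of a family of
evaluations. -/
theorem lsc_linear_eq_sup_evaluations {X : Type*} [TopologicalSpace X]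
    (φ : ValuationPD X → ℝ≥0∞)
    (hφ_add : ∀ μ ν σ : ValuationPD X, σ.1 = μ.1 + ν.1 → φ σ = φ μ + φ ν)
    (hφ_hom : ∀ (r : ℝ≥0) (μ σ : ValuationPD X),
      σ.1 = (fun f => (r : ℝ≥0∞) * μ.1 f) → φ σ = (r : ℝ≥0∞) * φ μ)
    (hφ_lsc : ∀ r : ℝ≥0,
      IsOpen[weakStarUpper X] {μ : ValuationPD X | (r : ℝ≥0∞) < φ μ}) :
    (∀ μ : ValuationPD X,
      φ μ = ⨆ (f : LSCFun X) (_ : ∀ ν : ValuationPD X, ν.1 f ≤ φ ν), μ.1 f) ∧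
    ∃ s : Set (LSCFun X), ∀ μ : ValuationPD X, φ μ = ⨆ f ∈ s, μ.1 f := by
  
  have hpt : ∀ μ : ValuationPD X,
      φ μ = ⨆ (f : LSCFun X) (_ : ∀ ν : ValuationPD X, ν.1 f ≤ φ ν), μ.1 f := by
    intro μ
    apply le_antisymm
    · refine ENNReal.le_of_forall_nnreal_lt fun r hr => ?_
      rcases eq_or_ne r 0 with rfl | hr0
      · simp
      · obtain ⟨f, hf, hrf⟩ := SSaux.main_exists hφ_add hφ_hom hφ_lsc μ hr0 hr
        exact le_iSup₂_of_le f hf hrf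
    · exact iSup₂_le fun f hf => hf μ
  exact ⟨hpt, ⟨{f | ∀ ν : ValuationPD X, ν.1 f ≤ φ ν}, fun μ => hpt μ⟩⟩
end

section
/- Let C = {x ∈ ℝ≥0 × ℝ≥0 | x.2 ≤ x.1} and D = ℝ≥0 × ℝ≥0, with the bilinear pairing ⟨x, y⟩ = x.1 * y.1 + x.2 * y.2, and let w(D,C) be the topology on D generated by the sets {y | r < ⟨x, y⟩} for x ∈ C and r : ℝ≥0. Then for y, y' ∈ D, every w(D,C)-open set containing y also contains y' if and only if y.1 ≤ y'.1 and y.1 + y.2 ≤ y'.1 + y'.2. (That is, the specialization order of w(D,C) is given by these two inequalities.) -/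
open scoped ENNReal NNReal Topology

/-- The weak upper topology `w(D,C)` on `D = ℝ≥0 × ℝ≥0` determined by the cone
`C = {x | x.2 ≤ x.1}` via the standard inner product pairing. -/
def weakUpperSierpinski : TopologicalSpace (ℝ≥0 × ℝ≥0) :=
  TopologicalSpace.generateFrom
    {S | ∃ x : ℝ≥0 × ℝ≥0, x.2 ≤ x.1 ∧ ∃ r : ℝ≥0,
      S = {y : ℝ≥0 × ℝ≥0 | r < x.1 * y.1 + x.2 * y.2}}

theorem pairing_mono (x y y' : ℝ≥0 × ℝ≥0) (hx : x.2 ≤ x.1)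
    (h1 : y.1 ≤ y'.1) (h2 : y.1 + y.2 ≤ y'.1 + y'.2) :
    x.1 * y.1 + x.2 * y.2 ≤ x.1 * y'.1 + x.2 * y'.2 := by
  obtain ⟨d, hd⟩ := exists_add_of_le hx
  rw [hd]
  calc (x.2 + d) * y.1 + x.2 * y.2 = d * y.1 + x.2 * (y.1 + y.2) := by ring
    _ ≤ d * y'.1 + x.2 * (y'.1 + y'.2) :=
        add_le_add (mul_le_mul_right h1 d) (mul_le_mul_right h2 x.2)
    _ = (x.2 + d) * y'.1 + x.2 * y'.2 := by ring

/-- The specialization order of the weak upper topology `w(D,C)` with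
`C = {x | x.2 ≤ x.1}` and `D = ℝ≥0 × ℝ≥0`: `y'` belongs to every open set
containing `y` iff `y.1 ≤ y'.1` and `y.1 + y.2 ≤ y'.1 + y'.2`. -/
theorem weakUpperSierpinski_specialization (y y' : ℝ≥0 × ℝ≥0) :
    (∀ U : Set (ℝ≥0 × ℝ≥0), IsOpen[weakUpperSierpinski] U → y ∈ U → y' ∈ U) ↔
      (y.1 ≤ y'.1 ∧ y.1 + y.2 ≤ y'.1 + y'.2) := by
  constructor
  · intro h
    constructor
    · by_contra hlt
      push_neg at hlt
      have := h {z : ℝ≥0 × ℝ≥0 | y'.1 < (1 : ℝ≥0) * z.1 + (0 : ℝ≥0) * z.2}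
        (TopologicalSpace.GenerateOpen.basic _ ⟨((1 : ℝ≥0), (0 : ℝ≥0)), zero_le_one, y'.1, rfl⟩)
        (by simpa using hlt)
      simp at this
    · by_contra hlt
      push_neg at hlt
      have := h {z : ℝ≥0 × ℝ≥0 | y'.1 + y'.2 < (1 : ℝ≥0) * z.1 + (1 : ℝ≥0) * z.2}
        (TopologicalSpace.GenerateOpen.basic _ ⟨((1 : ℝ≥0), (1 : ℝ≥0)), le_refl _, y'.1 + y'.2, rfl⟩)
        (by simpa using hlt)
      simp at this
  · rintro ⟨h1, h2⟩ U hU hyU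
    induction hU with
    | basic S hS =>
        obtain ⟨x, hx, r, rfl⟩ := hS
        exact lt_of_lt_of_le hyU (pairing_mono x y y' hx h1 h2)
    | univ => trivial
    | inter S T _ _ ihS ihT => exact ⟨ihS hyU.1, ihT hyU.2⟩
    | sUnion 𝒮 _ ih =>
        obtain ⟨S, hS, hyS⟩ := hyU
        exact ⟨S, hS, ih S hS hyS⟩
end

section
/- Finite-dimensional duality for full closed cones: Let n ≥ 1 and let C, D ⊆ (Fin n → ℝ) be topologically closed subsets, each closed under addition and under scalar multiplication by nonnegative reals, each with nonempty interior (for the Euclidean topology), and such that ⟨c, d⟩ := ∑ i, c i * d i ≥ 0 for all c ∈ C, d ∈ D. Let φ : (Fin n → ℝ) → ℝ satisfy: φ(y) ≥ 0, φ(y + y') = φ(y) + φ(y'), and φ(r • y) = r * φ(y) for all y, y' ∈ D and r : ℝ with r ≥ 0; and suppose φ is lower semicontinuous on D for the weak upper topology w(D,C), i.e. for every r ≥ 0 the set {y ∈ D | r < φ(y)} is open in the topology on D induced by the topology on Fin n → ℝ generated by the sets {y | s < ⟨x, y⟩} for x ∈ C and s ≥ 0. Then there exists a unique x₀ ∈ C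 such that φ(y) = ⟨x₀, y⟩ for all y ∈ D. -/
open scoped Topology

lemma generateOpen_finite_inter {X : Type*} {g : Set (Set X)} {U : Set X}
    (hU : TopologicalSpace.GenerateOpen g U) :
    ∀ p ∈ U, ∃ T : Set (Set X), T.Finite ∧ T ⊆ g ∧ p ∈ ⋂₀ T ∧ ⋂₀ T ⊆ U := by
  induction hU with
  | basic S hS =>
      intro p hp
      exact ⟨{S}, Set.finite_singleton S, by simpa using hS, by simpa using hp, by simp⟩
  | univ => intro p _; exact ⟨∅, Set.finite_empty, by simp, by simp, by simp⟩
  | inter U V hU hV ihU ihV =>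
      intro p hp
      obtain ⟨T1, hf1, hg1, hp1, hs1⟩ := ihU p hp.1
      obtain ⟨T2, hf2, hg2, hp2, hs2⟩ := ihV p hp.2
      refine ⟨T1 ∪ T2, hf1.union hf2, Set.union_subset hg1 hg2, ?_, ?_⟩
      · rw [Set.sInter_union]; exact ⟨hp1, hp2⟩
      · rw [Set.sInter_union]; exact fun x hx => ⟨hs1 hx.1, hs2 hx.2⟩
  | sUnion S hS ih =>
      intro p hp
      obtain ⟨V, hVS, hpV⟩ := hp
      obtain ⟨T, hf, hg, hpT, hsT⟩ := ih V hVS p hpV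
      exact ⟨T, hf, hg, hpT, hsT.trans (Set.subset_sUnion_of_mem hVS)⟩

/-- Finite-dimensional duality for full closed cones: if `C, D ⊆ ℝⁿ` are closed
cones with nonempty interior pairing nonnegatively, then every nonnegative
linear functional on `D` that is lower semicontinuous for the weak upper
topology `w(D,C)` is given by inner product with a unique element of `C`. -/
theorem finite_dimensional_cone_duality (n : ℕ) (hn : 1 ≤ n)
    (C D : Set (Fin n → ℝ))
    (hC_closed : IsClosed C) (hD_closed : IsClosed D)
    (hC_add : ∀ x ∈ C, ∀ y ∈ C, x + y ∈ C)
    (hC_smul : ∀ r : ℝ, 0 ≤ r → ∀ x ∈ C, r • x ∈ C)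
    (hD_add : ∀ x ∈ D, ∀ y ∈ D, x + y ∈ D)
    (hD_smul : ∀ r : ℝ, 0 ≤ r → ∀ x ∈ D, r • x ∈ D)
    (hC_int : (interior C).Nonempty) (hD_int : (interior D).Nonempty)
    (hpos : ∀ c ∈ C, ∀ d ∈ D, 0 ≤ ∑ i, c i * d i)
    (φ : (Fin n → ℝ) → ℝ)
    (hφ_nonneg : ∀ y ∈ D, 0 ≤ φ y)
    (hφ_add : ∀ y ∈ D, ∀ y' ∈ D, φ (y + y') = φ y + φ y')
    (hφ_smul : ∀ r : ℝ, 0 ≤ r → ∀ y ∈ D, φ (r • y) = r * φ y)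
    (hφ_lsc : ∀ r : ℝ, 0 ≤ r → ∃ U : Set (Fin n → ℝ),
      IsOpen[TopologicalSpace.generateFrom
        {S | ∃ x ∈ C, ∃ s : ℝ, 0 ≤ s ∧ S = {y : Fin n → ℝ | s < ∑ i, x i * y i}}] U ∧
      {y ∈ D | r < φ y} = U ∩ D) :
    ∃! x₀ : Fin n → ℝ, x₀ ∈ C ∧ ∀ y ∈ D, φ y = ∑ i, x₀ i * y i := by
  classical
  obtain ⟨y₀, hy₀i⟩ := hD_int
  have hy₀D : y₀ ∈ D := interior_subset hy₀i
  obtain ⟨δ, hδpos, hball⟩ := Metric.mem_nhds_iff.mp (mem_interior_iff_mem_nhds.mp hy₀i)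
  -- small perturbations of y₀ stay in D
  have hpert : ∀ v : Fin n → ℝ, ∃ ε : ℝ, 0 < ε ∧ ∀ t : ℝ, 0 ≤ t → t ≤ ε → y₀ + t • v ∈ D := by
    intro v
    have hv1 : (0:ℝ) < ‖v‖ + 1 := by positivity
    refine ⟨δ / 2 / (‖v‖ + 1), div_pos (div_pos hδpos two_pos) hv1, fun t ht0 htε => hball ?_⟩
    rw [Metric.mem_ball, dist_eq_norm, add_sub_cancel_left, norm_smul, Real.norm_eq_abs,
      abs_of_nonneg ht0]
    have h2 : δ / 2 / (‖v‖ + 1) * (‖v‖ + 1) = δ / 2 := by field_simp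
    nlinarith [norm_nonneg v]
  -- every vector can be pushed into D by adding a multiple of y₀
  have hex : ∀ v : Fin n → ℝ, ∃ t : ℝ, 0 ≤ t ∧ v + t • y₀ ∈ D := by
    intro v
    obtain ⟨ε, hε, hεD⟩ := hpert v
    refine ⟨ε⁻¹, inv_nonneg.mpr hε.le, ?_⟩
    have hm : y₀ + ε • v ∈ D := hεD ε hε.le le_rfl
    have heq : v + ε⁻¹ • y₀ = ε⁻¹ • (y₀ + ε • v) := by
      rw [smul_add, smul_smul, inv_mul_cancel₀ (ne_of_gt hε), one_smul, add_comm]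
    rw [heq]; exact hD_smul _ (inv_nonneg.mpr hε.le) _ hm
  choose T hT0 hTD using hex
  obtain ⟨Φ, hΦdef⟩ : ∃ Φ : (Fin n → ℝ) → ℝ,
      ∀ v, Φ v = φ (v + T v • y₀) - T v * φ y₀ := ⟨_, fun v => rfl⟩
  -- well-definedness key
  have key : ∀ (v : Fin n → ℝ) (t s : ℝ), 0 ≤ t → 0 ≤ s → t ≤ s → v + t • y₀ ∈ D →
      v + s • y₀ ∈ D → φ (v + s • y₀) = φ (v + t • y₀) + (s - t) * φ y₀ := by
    intro v t s ht hs hts hvt hvs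
    have h1 : (s - t) • y₀ ∈ D := hD_smul _ (by linarith) _ hy₀D
    have h2 : v + s • y₀ = (v + t • y₀) + (s - t) • y₀ := by rw [sub_smul]; abel
    rw [h2, hφ_add _ hvt _ h1, hφ_smul _ (by linarith) _ hy₀D]
  have hΦwd : ∀ (v : Fin n → ℝ) (t : ℝ), 0 ≤ t → v + t • y₀ ∈ D →
      Φ v = φ (v + t • y₀) - t * φ y₀ := by
    intro v t ht hvt
    rw [hΦdef]
    rcases le_total (T v) t with h | h
    · rw [key v (T v) t (hT0 v) ht h (hTD v) hvt]; ring
    · rw [key v t (T v) ht (hT0 v) h hvt (hTD v)]; ring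
  have h0D : (0 : Fin n → ℝ) ∈ D := by
    have := hD_smul 0 le_rfl y₀ hy₀D; simpa using this
  have hφ0 : φ 0 = 0 := by
    have := hφ_smul 0 le_rfl y₀ hy₀D; simpa using this
  have hΦ0 : Φ 0 = 0 := by
    have := hΦwd 0 0 le_rfl (by simpa using h0D); simpa [hφ0] using this
  have hΦ_add : ∀ v w, Φ (v + w) = Φ v + Φ w := by
    intro v w
    have hsplit : (v + w) + (T v + T w) • y₀ = (v + T v • y₀) + (w + T w • y₀) := by
      rw [add_smul]; abel
    have hmem : (v + w) + (T v + T w) • y₀ ∈ D := by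
      rw [hsplit]; exact hD_add _ (hTD v) _ (hTD w)
    rw [hΦwd (v + w) (T v + T w) (add_nonneg (hT0 v) (hT0 w)) hmem, hsplit,
      hφ_add _ (hTD v) _ (hTD w), hΦdef v, hΦdef w]
    ring
  have hΦ_smul_nn : ∀ r : ℝ, 0 ≤ r → ∀ v, Φ (r • v) = r * Φ v := by
    intro r hr v
    have hsplit : r • v + (r * T v) • y₀ = r • (v + T v • y₀) := by
      rw [smul_add, mul_smul]
    have hmem : r • v + (r * T v) • y₀ ∈ D := by
      rw [hsplit]; exact hD_smul r hr _ (hTD v)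
    rw [hΦwd (r • v) (r * T v) (mul_nonneg hr (hT0 v)) hmem, hsplit,
      hφ_smul r hr _ (hTD v), hΦdef v]
    ring
  have hΦ_neg : ∀ v, Φ (-v) = -Φ v := by
    intro v
    have h := hΦ_add v (-v)
    rw [add_neg_cancel, hΦ0] at h
    linarith
  have hΦ_smul : ∀ (r : ℝ) (v), Φ (r • v) = r * Φ v := by
    intro r v
    rcases le_or_gt 0 r with hr | hr
    · exact hΦ_smul_nn r hr v
    · have h1 : r • v = -((-r) • v) := by rw [neg_smul, neg_neg]
      rw [h1, hΦ_neg, hΦ_smul_nn (-r) (by linarith)]; ring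
  -- canonical basis
  obtain ⟨e, he_def⟩ : ∃ e : Fin n → (Fin n → ℝ),
      ∀ i, e i = fun j => if i = j then (1:ℝ) else 0 := ⟨_, fun i => rfl⟩
  obtain ⟨x₀, hx₀def⟩ : ∃ x₀ : Fin n → ℝ, ∀ i, x₀ i = Φ (e i) := ⟨_, fun i => rfl⟩
  have hrep : ∀ v : Fin n → ℝ, Φ v = ∑ i, x₀ i * v i := by
    intro v
    let F : (Fin n → ℝ) →ₗ[ℝ] ℝ :=
      { toFun := Φ, map_add' := hΦ_add, map_smul' := fun r w => by simpa using hΦ_smul r w }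
    have hF : ∀ w, F w = Φ w := fun w => rfl
    have hv : v = ∑ i, v i • e i := by
      simp only [he_def]; exact pi_eq_sum_univ v
    have : F v = ∑ i, x₀ i * v i := by
      conv_lhs => rw [hv]
      rw [map_sum]
      refine Finset.sum_congr rfl fun i _ => ?_
      rw [hF, hΦ_smul, hx₀def i]; ring
    exact this
  have hφ_rep : ∀ y ∈ D, φ y = ∑ i, x₀ i * y i := by
    intro y hy
    have h := hΦwd y 0 le_rfl (by simpa using hy)
    simp only [zero_smul, add_zero, zero_mul, sub_zero] at h
    rw [← hrep y, h]
  -- bilinear expansion helper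
  have ip_lin : ∀ (x u v : Fin n → ℝ) (t : ℝ),
      ∑ i, x i * (u + t • v) i = ∑ i, x i * u i + t * ∑ i, x i * v i := by
    intro x u v t
    rw [Finset.mul_sum, ← Finset.sum_add_distrib]
    refine Finset.sum_congr rfl fun i _ => ?_
    show x i * (u i + t * v i) = x i * u i + t * (x i * v i)
    ring
  -- the crucial dual-cone step
  have hdual : ∀ z : Fin n → ℝ, (∀ c ∈ C, 0 ≤ ∑ i, c i * z i) → 0 ≤ Φ z := by
    intro z hz
    by_contra hneg
    push_neg at hneg
    obtain ⟨ε, hε, hεD⟩ := hpert z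
    have hval : ∀ t : ℝ, 0 ≤ t → y₀ + t • z ∈ D → φ (y₀ + t • z) = φ y₀ + t * Φ z := by
      intro t ht hmem
      rw [hφ_rep _ hmem, ip_lin, ← hrep z, ← hφ_rep y₀ hy₀D]
    rcases eq_or_lt_of_le (hφ_nonneg y₀ hy₀D) with hc₀ | hc₀
    · have hm := hεD ε hε.le le_rfl
      have hnn := hφ_nonneg _ hm
      rw [hval ε hε.le hm, ← hc₀] at hnn
      nlinarith
    · set S := {t : ℝ | 0 ≤ t ∧ y₀ + t • z ∈ D} with hSdef
      have hSne : S.Nonempty := ⟨ε, hε.le, hεD ε hε.le le_rfl⟩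
      have hSbdd : BddAbove S := by
        refine ⟨φ y₀ / (-Φ z), fun t ht => ?_⟩
        have hnn := hφ_nonneg _ ht.2
        rw [hval t ht.1 ht.2] at hnn
        rw [le_div_iff₀ (by linarith : (0:ℝ) < -Φ z)]
        nlinarith
      have hScl : IsClosed S := by
        have hSeq : S = Set.Ici (0:ℝ) ∩ (fun t : ℝ => y₀ + t • z) ⁻¹' D := by
          ext t; simp [hSdef, Set.mem_Ici]
        rw [hSeq]
        exact isClosed_Ici.inter
          (hD_closed.preimage (continuous_const.add (continuous_id.smul continuous_const)))
      set α := sSup S with hαdef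
      have hαS : α ∈ S := hScl.csSup_mem hSne hSbdd
      have hαε : ε ≤ α := le_csSup hSbdd ⟨hε.le, hεD ε hε.le le_rfl⟩
      have hα0 : 0 < α := lt_of_lt_of_le hε hαε
      have hystar : y₀ + α • z ∈ D := hαS.2
      set p := y₀ + (y₀ + α • z) with hpdef
      have hpD : p ∈ D := hD_add _ hy₀D _ hystar
      have hφp : φ p = φ y₀ + φ (y₀ + α • z) := hφ_add _ hy₀D _ hystar
      have hφp_pos : 0 < φ p := by
        have := hφ_nonneg _ hystar; rw [hφp]; linarith
      set q := p + α • z with hqdef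
      have hqD : q ∈ D := by
        have hq2 : q = (y₀ + α • z) + (y₀ + α • z) := by rw [hqdef, hpdef]; abel
        rw [hq2]; exact hD_add _ hystar _ hystar
      have hφq : φ q = φ p + α * Φ z := by
        rw [hφ_rep _ hqD, hqdef, ip_lin, ← hrep z, ← hφ_rep _ hpD]
      set r := max (φ p + α * Φ z / 2) 0 with hrdef
      have hr0 : 0 ≤ r := le_max_right _ _
      have hrp : r < φ p := by
        rw [hrdef]
        apply max_lt _ hφp_pos
        nlinarith
      obtain ⟨U, hUopen, hUeq⟩ := hφ_lsc r hr0
      have hpU : p ∈ U := by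
        have hmem : p ∈ {y ∈ D | r < φ y} := ⟨hpD, hrp⟩
        rw [hUeq] at hmem; exact hmem.1
      obtain ⟨Tset, hTfin, hTsub, hpT, hTU⟩ := generateOpen_finite_inter hUopen p hpU
      have hqT : q ∈ ⋂₀ Tset := by
        intro S' hS'
        have hpS' := Set.mem_sInter.mp hpT S' hS'
        obtain ⟨x, hxC, s, hs0, hSeq⟩ := hTsub hS'
        rw [hSeq] at hpS' ⊢
        simp only [Set.mem_setOf_eq] at hpS' ⊢
        rw [hqdef, ip_lin]
        nlinarith [hz x hxC, hα0.le]
      have hqmem : q ∈ {y ∈ D | r < φ y} := by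
        rw [hUeq]; exact ⟨hTU hqT, hqD⟩
      have hrq : r < φ q := hqmem.2
      have hle : φ p + α * Φ z / 2 ≤ r := le_max_left _ _
      have hprod : α * Φ z < 0 := mul_neg_of_pos_of_neg hα0 hneg
      rw [hφq] at hrq
      linarith
  -- 0 ∈ C and convexity of C
  have h0C : (0 : Fin n → ℝ) ∈ C := by
    obtain ⟨c, hc⟩ := hC_int
    have := hC_smul 0 le_rfl c (interior_subset hc); simpa using this
  have hCconv : Convex ℝ C := by
    intro a ha b hb s t hs ht _
    exact hC_add _ (hC_smul s hs a ha) _ (hC_smul t ht b hb)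
  -- x₀ ∈ C by separation
  have hx₀C : x₀ ∈ C := by
    by_contra hx₀
    obtain ⟨f, u, hfx, hfC⟩ := geometric_hahn_banach_point_closed hCconv hC_closed hx₀
    have hu0 : u < 0 := by have := hfC 0 h0C; simpa using this
    have hfCnn : ∀ c ∈ C, 0 ≤ f c := by
      intro c hc
      by_contra hfc
      push_neg at hfc
      have hpos' : 0 < (u - 1) / f c := div_pos_of_neg_of_neg (by linarith) hfc
      have hl : ((u - 1) / f c) • c ∈ C := hC_smul _ hpos'.le c hc
      have hval := hfC _ hl
      rw [map_smul, smul_eq_mul, div_mul_cancel₀ _ (ne_of_lt hfc)] at hval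
      linarith
    obtain ⟨z, hzdef⟩ : ∃ z : Fin n → ℝ, ∀ i, z i = f (e i) := ⟨_, fun i => rfl⟩
    have hfv : ∀ v : Fin n → ℝ, f v = ∑ i, z i * v i := by
      intro v
      have hv : v = ∑ i, v i • e i := by
        simp only [he_def]; exact pi_eq_sum_univ v
      conv_lhs => rw [hv]
      rw [map_sum]
      simp only [map_smul, smul_eq_mul]
      exact Finset.sum_congr rfl fun i _ => by rw [hzdef i]; ring
    have h1 : ∀ c ∈ C, 0 ≤ ∑ i, c i * z i := by
      intro c hc
      have h := hfCnn c hc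
      rw [hfv c] at h
      calc (0:ℝ) ≤ ∑ i, z i * c i := h
        _ = ∑ i, c i * z i := Finset.sum_congr rfl fun i _ => mul_comm _ _
    have h2 := hdual z h1
    have h3 : f x₀ = Φ z := by
      rw [hfv, hrep]
      exact Finset.sum_congr rfl fun i _ => mul_comm _ _
    linarith
  -- conclusion
  refine ⟨x₀, ⟨hx₀C, hφ_rep⟩, ?_⟩
  rintro x₁ ⟨hx₁C, hx₁rep⟩
  funext i
  obtain ⟨ε, hε, hεD⟩ := hpert (e i)
  have hm := hεD ε hε.le le_rfl
  have he_sum : ∀ x : Fin n → ℝ, ∑ j, x j * e i j = x i := by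
    intro x
    simp only [he_def]
    simp
  have h1 := hx₁rep _ hm
  have h2 := hφ_rep _ hm
  have h3 := hx₁rep _ hy₀D
  have h4 := hφ_rep _ hy₀D
  rw [ip_lin, he_sum] at h1 h2
  have hεx : ε * x₁ i = ε * x₀ i := by linarith
  exact mul_left_cancel₀ (ne_of_gt hε) hεx
end
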